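/- arXiv:2501.04645 — 8 statements merged into one kernel-verified Lean document; each statement's English description precedes it below -/
import Mathlib

section
/- Let c ∈ ℂ \ {0} and let s ∈ ℂ with s² = c (so s = √c ≠ 0). Let f : ℂ → ℂ satisfy f(s) = s and f(−z) = −f(z) for all z ∈ ℂ. Define τ(z) = (z + s)/(z − s), τ⁻¹(z) = s(z + 1)/(z − 1) and f̃(z) = τ(f(τ⁻¹(z))). Then for every z ∈ ℂ with z ≠ 0 and z ≠ 1 one has f̃(z) = 1/f̃(1/z) (division by zero is interpreted with the convention x/0 = 0). -/
/-- Let `c ≠ 0`, `s² = c`, and let `f : ℂ → ℂ` satisfy `f(s) = s` and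
`f(−z) = −f(z)`. With `τ(z) = (z+s)/(z−s)`, `τ⁻¹(z) = s(z+1)/(z−1)` and
`f̃ = τ ∘ f ∘ τ⁻¹`, one has `f̃(z) = 1/f̃(1/z)` for all `z ≠ 0, 1`
(division by zero yields 0). -/
theorem stmt5 (c s : ℂ) (hc : c ≠ 0) (hs : s ^ 2 = c)
    (f : ℂ → ℂ) (hfs : f s = s) (hodd : ∀ z : ℂ, f (-z) = -f z)
    (tau tauInv ftilde : ℂ → ℂ)
    (htau : ∀ z : ℂ, tau z = (z + s) / (z - s))
    (htauInv : ∀ z : ℂ, tauInv z = s * (z + 1) / (z - 1))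
    (hftilde : ∀ z : ℂ, ftilde z = tau (f (tauInv z))) :
    ∀ z : ℂ, z ≠ 0 → z ≠ 1 → ftilde z = 1 / ftilde (1 / z) := by
  have hsne : s ≠ 0 := by
    intro h; apply hc; rw [← hs, h]; ring
  intro z hz hz1
  have hinv : tauInv (1 / z) = -tauInv z := by
    rw [htauInv, htauInv]
    have h1 : z - 1 ≠ 0 := sub_ne_zero.mpr hz1
    have h2 : (1:ℂ) - z ≠ 0 := fun h => hz1 (by linear_combination -h)
    field_simp
    ring
  have key : ∀ w : ℂ, tau w = 1 / tau (-w) := by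
    intro w
    rw [htau, htau]
    rcases eq_or_ne w s with rfl | hws
    · simp
    rcases eq_or_ne w (-s) with rfl | hwns
    · have : -s - s ≠ 0 := fun h => hsne (by linear_combination -h/2)
      simp [this]
    · have h1 : w - s ≠ 0 := sub_ne_zero.mpr hws
      have h2 : w + s ≠ 0 := by
        intro h; apply hwns; linear_combination h
      have h3 : -w - s ≠ 0 := by
        intro h; apply hwns; linear_combination -h
      have h4 : -w + s ≠ 0 := by
        intro h; apply hws; linear_combination -h
      rw [one_div, inv_div]
      field_simp
      ring
  rw [hftilde, hftilde, hinv, hodd, ← key]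
end

section
/- Let n ≥ 1 and let p, q be coprime polynomials over ℂ with max(natDegree p, natDegree q) = n, with p(1) = q(1) and q(1) ≠ 0, and satisfying the polynomial identity p·(reflect n p) = q·(reflect n q). Then q = reflect n p. -/
open Polynomial

private lemma refl_refl (N : ℕ) (f : Polynomial ℂ) : (f.reflect N).reflect N = f := by
  ext i
  simp [coeff_reflect, revAt_invol]

private lemma natDeg_reflect_le {N : ℕ} {f : Polynomial ℂ} (h : f.natDegree ≤ N) :
    (f.reflect N).natDegree ≤ N := by
  apply natDegree_le_iff_coeff_eq_zero.mpr
  intro i hi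
  rw [coeff_reflect, revAt_eq_self_of_lt hi]
  exact coeff_eq_zero_of_natDegree_lt (lt_of_le_of_lt h hi)

private lemma eval_one_reflect {N : ℕ} {f : Polynomial ℂ} (h : f.natDegree ≤ N) :
    (f.reflect N).eval 1 = f.eval 1 := by
  letI : Invertible (1 : ℂ) := invertibleOne
  have h2 := eval₂_reflect_mul_pow (RingHom.id ℂ) (1 : ℂ) N f h
  rw [invOf_one, one_pow, mul_one] at h2
  simpa only [eval] using h2

/-- Let `n ≥ 1` and let `p, q` be coprime polynomials over `ℂ` with
`max (natDegree p) (natDegree q) = n`, `p(1) = q(1)`, `q(1) ≠ 0`, and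
`p·(reflect n p) = q·(reflect n q)`. Then `q = reflect n p`. -/
theorem stmt6 (n : ℕ) (hn : 1 ≤ n) (p q : Polynomial ℂ)
    (hcop : IsCoprime p q)
    (hdeg : max p.natDegree q.natDegree = n)
    (h1 : p.eval 1 = q.eval 1) (hq1 : q.eval 1 ≠ 0)
    (hfun : p * p.reflect n = q * q.reflect n) :
    q = p.reflect n := by
  have hp1 : p.eval 1 ≠ 0 := h1 ▸ hq1
  have hp0 : p ≠ 0 := fun h => hp1 (by simp [h])
  have hq0 : q ≠ 0 := fun h => hq1 (by simp [h])
  have hpn : p.natDegree ≤ n := hdeg ▸ le_max_left _ _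
  have hqn : q.natDegree ≤ n := hdeg ▸ le_max_right _ _
  have hd1 : q ∣ p.reflect n :=
    (hcop.symm).dvd_of_dvd_mul_left ⟨q.reflect n, hfun⟩
  obtain ⟨a, ha⟩ := hd1
  have hd2 : p ∣ q.reflect n :=
    hcop.dvd_of_dvd_mul_left ⟨p.reflect n, hfun.symm⟩
  obtain ⟨b, hb⟩ := hd2
  have hab : a = b := by
    have h' : p * (q * a) = q * (p * b) := by rw [← ha, ← hb]; exact hfun
    have h2 : (p * q) * a = (p * q) * b := by linear_combination h'
    exact mul_left_cancel₀ (mul_ne_zero hp0 hq0) h2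
  subst hab
  have ha0 : a ≠ 0 := by
    intro h
    rw [h, mul_zero] at ha
    exact hp0 (reflect_eq_zero_iff.mp ha)
  set d := a.natDegree with hdd
  have hdn : q.natDegree + d ≤ n := by
    have h3 : (p.reflect n).natDegree ≤ n := natDeg_reflect_le hpn
    rwa [ha, natDegree_mul hq0 ha0] at h3
  have hdn' : p.natDegree + d ≤ n := by
    have h3 : (q.reflect n).natDegree ≤ n := natDeg_reflect_le hqn
    rwa [hb, natDegree_mul hp0 ha0] at h3
  have hqle : q.natDegree ≤ n - d := Nat.le_sub_of_add_le hdn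
  have hple : p.natDegree ≤ n - d := Nat.le_sub_of_add_le hdn'
  have hdle : d ≤ n := le_trans (Nat.le_add_left _ _) hdn
  have hnd : n - d + d = n := Nat.sub_add_cancel hdle
  have hp_eq : p = q.reflect (n - d) * a.reflect d := by
    have h4 := congrArg (reflect n) ha
    rw [refl_refl] at h4
    rw [h4]
    calc reflect n (q * a) = reflect (n - d + d) (q * a) := by rw [hnd]
    _ = q.reflect (n - d) * a.reflect d := reflect_mul q a hqle le_rfl
  have hq_eq : q = p.reflect (n - d) * a.reflect d := by
    have h4 := congrArg (reflect n) hb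
    rw [refl_refl] at h4
    rw [h4]
    calc reflect n (p * a) = reflect (n - d + d) (p * a) := by rw [hnd]
    _ = p.reflect (n - d) * a.reflect d := reflect_mul p a hple le_rfl
  have hunit : IsUnit (a.reflect d) :=
    hcop.isUnit_of_dvd' ⟨q.reflect (n - d), by rw [hp_eq]; ring⟩
      ⟨p.reflect (n - d), by rw [hq_eq]; ring⟩
  obtain ⟨c, -, hc⟩ := Polynomial.isUnit_iff.mp hunit
  have haC : a = C c * X ^ d := by
    have h5 := congrArg (reflect d) hc
    rw [refl_refl, reflect_C] at h5
    exact h5.symm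
  have hd0 : d = 0 := by
    have h6 := max_le hple hqle
    rw [hdeg] at h6
    omega
  have hc1 : c = 1 := by
    have ev := eval_one_reflect (f := p) hpn
    rw [ha, haC, hd0, h1] at ev
    simp only [pow_zero, mul_one, eval_mul, eval_C] at ev
    exact mul_left_cancel₀ hq1 (ev.trans (mul_one _).symm)
  rw [ha, haC, hd0, hc1]
  simp
end

section
/- Let n ≥ 1, k ≥ 1 and let r_1, …, r_k ∈ ℂ with r_i ≠ 1 for all i. Define the Newton-like operator O : ℂ → ℂ by O(z) = z^n·∏_{i=1}^k (z − r_i)/(1 − r_i z) (with the convention x/0 = 0). Then O is complex-differentiable at z = 1 and its derivative there equals O'(1) = n + ∑_{j=1}^k (1 + r_j)/(1 − r_j); equivalently, writing ∏_{i=1}^k (X − r_i) = X^k + a_1 X^{k−1} + ⋯ + a_k, one has O'(1) = n + k − 2·(a_1 + 2a_2 + ⋯ + k·a_k)/(1 + a_1 + ⋯ + a_k). -/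
open Polynomial Finset

lemma sumIcc_aux (f : ℕ → ℂ) (k : ℕ) :
    ∑ j ∈ Finset.Icc 1 k, f j = ∑ m ∈ Finset.range k, f (m + 1) := by
  induction k with
  | zero => simp
  | succ k ih => rw [Finset.sum_Icc_succ_top (by omega), ih, Finset.sum_range_succ]

/-- Let `n, k ≥ 1` and `r₁, …, r_k ∈ ℂ` with `rᵢ ≠ 1`. The Newton-like
operator `O(z) = z^n·∏ (z − rᵢ)/(1 − rᵢz)` (with `x/0 = 0`) is complex-differentiable at
`z = 1` with `O'(1) = n + ∑ (1+r_j)/(1−r_j)`; equivalently, writing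
`∏ (X − rᵢ) = X^k + a₁X^{k−1} + ⋯ + a_k`, one has
`O'(1) = n + k − 2(a₁ + 2a₂ + ⋯ + k·a_k)/(1 + a₁ + ⋯ + a_k)`. -/
theorem stmt13 (n k : ℕ) (hn : 1 ≤ n) (hk : 1 ≤ k)
    (r : Fin k → ℂ) (hr : ∀ i, r i ≠ 1)
    (P : Polynomial ℂ) (hP : P = ∏ i, (X - C (r i)))
    (O : ℂ → ℂ) (hO : ∀ z : ℂ, O z = z ^ n * ∏ i, (z - r i) / (1 - r i * z)) :
    DifferentiableAt ℂ O 1 ∧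
    deriv O 1 = (n : ℂ) + ∑ j, (1 + r j) / (1 - r j) ∧
    deriv O 1 = (n : ℂ) + (k : ℂ)
        - 2 * (∑ j ∈ Finset.Icc 1 k, (j : ℂ) * P.coeff (k - j))
            / (1 + ∑ j ∈ Finset.Icc 1 k, P.coeff (k - j)) := by
  have hne : ∀ i : Fin k, (1 : ℂ) - r i ≠ 0 := fun i => sub_ne_zero.mpr (fun h => hr i h.symm)
  have hone : ∀ j : Fin k, ((1:ℂ) - r j) / (1 - r j * 1) = 1 := by
    intro j; rw [mul_one, div_self (hne j)]
  -- derivative of each factor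
  have hgi : ∀ i : Fin k, HasDerivAt (fun z : ℂ => (z - r i) / (1 - r i * z))
      ((1 + r i) / (1 - r i)) 1 := by
    intro i
    have h1 : HasDerivAt (fun z : ℂ => z - r i) 1 1 := (hasDerivAt_id 1).sub_const _
    have h2 : HasDerivAt (fun z : ℂ => 1 - r i * z) (-(r i)) 1 := by
      simpa using (((hasDerivAt_id (1:ℂ)).const_mul (r i)).const_sub 1)
    have hd : (1 : ℂ) - r i * 1 ≠ 0 := by simpa using hne i
    have := h1.fun_div h2 hd
    refine this.congr_deriv (Eq.symm ?_)
    have := hne i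
    field_simp
    ring
  have hprod : HasDerivAt (fun z : ℂ => ∏ i, (z - r i) / (1 - r i * z))
      (∑ i, (1 + r i) / (1 - r i)) 1 := by
    have := HasDerivAt.fun_finsetProd (u := Finset.univ) (fun i _ => hgi i)
    refine this.congr_deriv (Eq.symm ?_)
    refine (Finset.sum_congr rfl fun i _ => ?_).symm
    rw [Finset.prod_congr rfl (fun j _ => hone j), Finset.prod_const_one, one_smul]
  have hderiv : HasDerivAt O ((n : ℂ) + ∑ j, (1 + r j) / (1 - r j)) 1 := by
    have hfun : O = fun z : ℂ => z ^ n * ∏ i, (z - r i) / (1 - r i * z) := funext hO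
    rw [hfun]
    have := (hasDerivAt_pow n (1:ℂ)).fun_mul hprod
    refine this.congr_deriv (Eq.symm ?_)
    rw [Finset.prod_congr rfl (fun j _ => hone j), Finset.prod_const_one]
    simp
  -- algebraic identities
  set Q : ℂ := ∏ i, (1 - r i) with hQ
  have hQne : Q ≠ 0 := Finset.prod_ne_zero_iff.mpr fun i _ => hne i
  set T : ℂ := ∑ i, (1 - r i)⁻¹ with hT
  set D : ℂ := ∑ i, ∏ j ∈ Finset.univ.erase i, (1 - r j) with hD
  have hDQT : D = Q * T := by
    rw [hD, hT, Finset.mul_sum]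
    refine Finset.sum_congr rfl fun i _ => ?_
    rw [hQ, ← Finset.mul_prod_erase Finset.univ _ (Finset.mem_univ i)]
    field_simp [hne i]
  have hdeg : P.natDegree = k := by
    rw [hP, Polynomial.natDegree_prod _ _ (fun i _ => X_sub_C_ne_zero (r i))]
    simp
  have hmonic : P.Monic := hP ▸ monic_prod_of_monic _ _ fun i _ => monic_X_sub_C (r i)
  have hck : P.coeff k = 1 := by
    have := hmonic.coeff_natDegree
    rwa [hdeg] at this
  have hevalQ : ∑ m ∈ Finset.range (k + 1), P.coeff m = Q := by
    have h1 : P.eval 1 = Q := by rw [hP]; simp [eval_prod, hQ]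
    have h2 := Polynomial.eval_eq_sum_range (p := P) (1 : ℂ)
    rw [hdeg] at h2
    simpa using (h2.symm.trans h1)
  -- D equals ∑ m * coeff m
  have hDsum : D = ∑ m ∈ Finset.range (k + 1), (m : ℂ) * P.coeff m := by
    have h1 : HasDerivAt (fun t : ℂ => ∏ i, (t - r i)) D 1 := by
      have := HasDerivAt.fun_finsetProd (u := Finset.univ)
        (fun (i : Fin k) _ => (hasDerivAt_id (1:ℂ)).sub_const (r i))
      refine this.congr_deriv (Eq.symm ?_)
      simp [hD]
    have hfun2 : (fun t : ℂ => ∏ i, (t - r i))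
        = fun t => ∑ m ∈ Finset.range (k + 1), P.coeff m * t ^ m := by
      funext t
      have h2 := Polynomial.eval_eq_sum_range (p := P) t
      rw [hdeg] at h2
      rw [← h2, hP]
      simp [eval_prod]
    have h3 : HasDerivAt (fun t : ℂ => ∑ m ∈ Finset.range (k + 1), P.coeff m * t ^ m)
        (∑ m ∈ Finset.range (k + 1), P.coeff m * ((m : ℂ) * 1 ^ (m - 1))) 1 :=
      HasDerivAt.fun_sum fun m _ => (hasDerivAt_pow m (1:ℂ)).const_mul _
    rw [hfun2] at h1
    have := h1.unique h3
    rw [this]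
    exact Finset.sum_congr rfl fun m _ => by rw [one_pow]; ring
  -- coefficient sums
  have hS0 : 1 + ∑ j ∈ Finset.Icc 1 k, P.coeff (k - j) = Q := by
    have h1 : ∑ j ∈ Finset.Icc 1 k, P.coeff (k - j)
        = ∑ m ∈ Finset.range k, P.coeff (k - 1 - m) := by
      rw [sumIcc_aux (fun j => P.coeff (k - j)) k]
      exact Finset.sum_congr rfl fun m _ => by congr 1; omega
    rw [h1, Finset.sum_range_reflect (fun m => P.coeff m) k]
    have h2 := Finset.sum_range_succ (fun m => P.coeff m) k
    rw [hevalQ, hck] at h2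
    linear_combination -h2
  have hS1 : ∑ j ∈ Finset.Icc 1 k, (j : ℂ) * P.coeff (k - j) = (k : ℂ) * Q - D := by
    have h1 : ∑ j ∈ Finset.Icc 1 k, (j : ℂ) * P.coeff (k - j)
        = ∑ m ∈ Finset.range k, ((k : ℂ) - (m : ℂ)) * P.coeff m := by
      rw [sumIcc_aux (fun j => (j : ℂ) * P.coeff (k - j)) k,
        ← Finset.sum_range_reflect (fun m => ((k : ℂ) - (m : ℂ)) * P.coeff m) k]
      refine Finset.sum_congr rfl fun m hm => ?_
      have hmk : m < k := Finset.mem_range.mp hm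
      have e1 : k - (m + 1) = k - 1 - m := by omega
      rw [e1]
      congr 1
      have e3 : ((k - 1 - m : ℕ) : ℂ) = (k : ℂ) - ((m + 1 : ℕ) : ℂ) := by
        rw [← Nat.cast_sub (by omega)]
        congr 1; omega
      rw [e3]; push_cast; ring
    have h2 : ∑ m ∈ Finset.range (k + 1), ((k : ℂ) - (m : ℂ)) * P.coeff m
        = ∑ m ∈ Finset.range k, ((k : ℂ) - (m : ℂ)) * P.coeff m := by
      rw [Finset.sum_range_succ]; simp
    have h3 : ∑ m ∈ Finset.range (k + 1), ((k : ℂ) - (m : ℂ)) * P.coeff m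
        = (k : ℂ) * Q - D := by
      rw [hDsum, ← hevalQ, Finset.mul_sum, ← Finset.sum_sub_distrib]
      exact Finset.sum_congr rfl fun m _ => by ring
    rw [h1, ← h2, h3]
  -- conclusion
  refine ⟨hderiv.differentiableAt, hderiv.deriv, ?_⟩
  rw [hderiv.deriv, hS0, hS1, hDQT]
  have hsum : ∑ j, (1 + r j) / (1 - r j) = 2 * T - (k : ℂ) := by
    have : ∀ j : Fin k, (1 + r j) / (1 - r j) = 2 * (1 - r j)⁻¹ - 1 := by
      intro j
      field_simp [hne j]
      ring
    rw [Finset.sum_congr rfl fun j _ => this j, Finset.sum_sub_distrib, ← Finset.mul_sum,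
      Finset.sum_const, Finset.card_univ, Fintype.card_fin, ← hT]
    simp [mul_comm]
  rw [hsum]
  field_simp
  ring
end

section
/- Let n ≥ 1, k ≥ 1, let A_1, …, A_k, B_1, …, B_k ∈ ℝ and α ∈ ℂ, and let r_1, …, r_k ∈ ℂ with r_i ≠ 1 for all i, such that the coefficients a_j of P(X) = ∏_{i=1}^k (X − r_i) = X^k + a_1 X^{k−1} + ⋯ + a_k satisfy a_j = A_j + B_j·α for j = 1, …, k. Let O(z) = z^n·∏_{i=1}^k (z − r_i)/(1 − r_i z), and set A = n + k + ∑_{j=1}^k (n+k−2j)A_j, B = ∑_{j=1}^k (n+k−2j)B_j, A' = 1 + ∑_{j=1}^k A_j, B' = ∑_{j=1}^k B_j, c = (AB − A'B')/(B² − B'²), ρ = (A'B − AB')/(B² − B'²). If B² − B'² > 0, then: |O'(1)| < 1 if and only if |α + c| < |ρ|; |O'(1)| = 1 if and only if |α + c| = |ρ|; and |O'(1)| > 1 if and only if |α + c| > |ρ|. That is, the fixed point z = 1 is attracting exactly inside the circle C: |α + c| = |ρ|, indifferent on C, and repelling outside C. -/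
open Polynomial

private theorem stmt15_eqhelp {x y u v : ℝ} (h1 : x < y ↔ u < v) (h2 : y < x ↔ v < u) :
    x = y ↔ u = v := by
  constructor <;> intro h
  · rcases lt_trichotomy u v with hh|hh|hh
    · exact absurd (h1.2 hh) (by rw [h]; exact lt_irrefl y)
    · exact hh
    · exact absurd (h2.2 hh) (by rw [h]; exact lt_irrefl y)
  · rcases lt_trichotomy x y with hh|hh|hh
    · exact absurd (h1.1 hh) (by rw [h]; exact lt_irrefl v)
    · exact hh
    · exact absurd (h2.1 hh) (by rw [h]; exact lt_irrefl v)

set_option maxHeartbeats 1000000 in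
/-- Stability of the fixed point `z = 1` of the Newton-like operator
`O(z) = z^n·∏ (z − rᵢ)/(1 − rᵢz)` when the coefficients `a_j = coeff (k−j)` of
`P(X) = ∏ (X − rᵢ)` depend linearly on a complex parameter `α`: `a_j = A_j + B_j·α`
with `A_j, B_j ∈ ℝ`. With `A = n+k+∑(n+k−2j)A_j`, `B = ∑(n+k−2j)B_j`,
`A' = 1+∑A_j`, `B' = ∑B_j`, `c = (AB−A'B')/(B²−B'²)`, `ρ = (A'B−AB')/(B²−B'²)`,
if `B²−B'² > 0` then `z = 1` is attracting iff `|α+c| < |ρ|`, indifferent iff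
`|α+c| = |ρ|`, repelling iff `|α+c| > |ρ|`. -/
theorem stmt15 (n k : ℕ) (hn : 1 ≤ n) (hk : 1 ≤ k)
    (A B : ℕ → ℝ) (α : ℂ)
    (r : Fin k → ℂ) (hr : ∀ i, r i ≠ 1)
    (P : Polynomial ℂ) (hP : P = ∏ i, (X - C (r i)))
    (hcoef : ∀ j ∈ Finset.Icc 1 k, P.coeff (k - j) = (A j : ℂ) + (B j : ℂ) * α)
    (O : ℂ → ℂ) (hO : ∀ z : ℂ, O z = z ^ n * ∏ i, (z - r i) / (1 - r i * z))
    (Abig Bbig A' B' c ρ : ℝ)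
    (hAbig : Abig = (n : ℝ) + (k : ℝ) + ∑ j ∈ Finset.Icc 1 k, ((n : ℝ) + (k : ℝ) - 2 * (j : ℝ)) * A j)
    (hBbig : Bbig = ∑ j ∈ Finset.Icc 1 k, ((n : ℝ) + (k : ℝ) - 2 * (j : ℝ)) * B j)
    (hA' : A' = 1 + ∑ j ∈ Finset.Icc 1 k, A j)
    (hB' : B' = ∑ j ∈ Finset.Icc 1 k, B j)
    (hc : c = (Abig * Bbig - A' * B') / (Bbig ^ 2 - B' ^ 2))
    (hρ : ρ = (A' * Bbig - Abig * B') / (Bbig ^ 2 - B' ^ 2))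
    (hBpos : Bbig ^ 2 - B' ^ 2 > 0) :
    (‖deriv O 1‖ < 1 ↔ ‖α + (c : ℂ)‖ < |ρ|) ∧
    (‖deriv O 1‖ = 1 ↔ ‖α + (c : ℂ)‖ = |ρ|) ∧
    (‖deriv O 1‖ > 1 ↔ ‖α + (c : ℂ)‖ > |ρ|) := by
  classical
  have h1 : ∀ i : Fin k, (1 : ℂ) - r i ≠ 0 := fun i => sub_ne_zero.2 (Ne.symm (hr i))
  -- Step 1 : deriv O 1 = n + ∑ (1 + rᵢ)/(1 - rᵢ)
  have hderiv : deriv O 1 = (n : ℂ) + ∑ i, (1 + r i) / (1 - r i) := by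
    have hfun : O = fun z => z ^ n * ∏ i, (z - r i) / (1 - r i * z) := funext hO
    have hprod : HasDerivAt (fun z : ℂ => ∏ i, (z - r i) / (1 - r i * z))
        (∑ i, (1 + r i) / (1 - r i)) 1 := by
      have hd : ∀ i : Fin k, i ∈ Finset.univ →
          HasDerivAt (fun z : ℂ => (z - r i) / (1 - r i * z)) ((1 + r i) / (1 - r i)) 1 := by
        intro i _
        have hnum : HasDerivAt (fun z : ℂ => z - r i) 1 1 := (hasDerivAt_id 1).sub_const _
        have hden : HasDerivAt (fun z : ℂ => 1 - r i * z) (-(r i)) 1 := by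
          simpa using ((hasDerivAt_id (1:ℂ)).const_mul (r i)).const_sub 1
        have := hnum.div hden (by simpa using h1 i)
        refine this.congr_deriv ?_
        have := h1 i
        field_simp
        ring
      have H := HasDerivAt.fun_finsetProd hd
      refine H.congr_deriv ?_
      rw [Finset.sum_congr rfl (fun i _ => ?_)]
      rw [Finset.prod_congr rfl (fun j _ => by rw [mul_one, div_self (h1 j)] :
            ∀ j ∈ Finset.univ.erase i, ((1:ℂ) - r j)/(1 - r j * 1) = 1),
        Finset.prod_const_one, one_smul]
    have hpow : HasDerivAt (fun z : ℂ => z ^ n) ((n : ℂ) * 1 ^ (n - 1)) 1 := hasDerivAt_pow n 1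
    have hmul := hpow.fun_mul hprod
    rw [hfun, hmul.deriv]
    have hprod1 : (∏ i, ((1:ℂ) - r i) / (1 - r i * 1)) = 1 := by
      rw [Finset.prod_congr rfl (fun j _ => by rw [mul_one, div_self (h1 j)]),
        Finset.prod_const_one]
    rw [hprod1]
    simp
  -- Step 2 : the sum in terms of P'(1)/P(1)
  have hPeval : P.eval 1 = ∏ i, (1 - r i) := by rw [hP]; simp [eval_prod]
  have hPne : P.eval 1 ≠ 0 := by rw [hPeval]; exact Finset.prod_ne_zero_iff.2 fun i _ => h1 i
  have hfeq : (fun z : ℂ => P.eval z) = fun z : ℂ => ∏ i, (z - r i) := by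
    funext z; rw [hP]; simp [eval_prod]
  have hd1 : HasDerivAt (fun z : ℂ => P.eval z) (P.derivative.eval 1) 1 := P.hasDerivAt 1
  have hd2 : HasDerivAt (fun z : ℂ => ∏ i, (z - r i))
      (∑ i, (∏ j ∈ Finset.univ.erase i, ((1:ℂ) - r j)) • (1:ℂ)) 1 :=
    HasDerivAt.fun_finsetProd (fun i _ => (hasDerivAt_id 1).sub_const _)
  rw [hfeq] at hd1
  have hder : P.derivative.eval 1 = ∑ i, ∏ j ∈ Finset.univ.erase i, ((1:ℂ) - r j) := by
    have := hd1.unique hd2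
    simpa using this
  have hterm : ∀ i : Fin k,
      (∏ j ∈ Finset.univ.erase i, ((1:ℂ) - r j)) = P.eval 1 * (1 - r i)⁻¹ := by
    intro i
    rw [hPeval, ← Finset.mul_prod_erase _ _ (Finset.mem_univ i), mul_comm ((1:ℂ) - r i) _]
    rw [mul_assoc, mul_inv_cancel₀ (h1 i), mul_one]
  have hsum : P.derivative.eval 1 = P.eval 1 * ∑ i, ((1:ℂ) - r i)⁻¹ := by
    rw [hder, Finset.mul_sum]; exact Finset.sum_congr rfl fun i _ => hterm i
  have hratio : P.derivative.eval 1 / P.eval 1 = ∑ i, ((1:ℂ) - r i)⁻¹ := by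
    rw [hsum, mul_comm, mul_div_assoc, div_self hPne, mul_one]
  have hS : ∑ i, (1 + r i) / (1 - r i)
      = -(k : ℂ) + 2 * (P.derivative.eval 1 / P.eval 1) := by
    rw [hratio]
    have hterm2 : ∀ i : Fin k, (1 + r i) / (1 - r i) = -1 + 2 * (1 - r i)⁻¹ := by
      intro i; have := h1 i; field_simp; ring
    rw [Finset.sum_congr rfl fun i _ => hterm2 i, Finset.sum_add_distrib, Finset.sum_const,
      ← Finset.mul_sum]
    simp
  -- Step 3 : coefficient expressions for P(1) and P'(1)
  have hmonic : P.Monic := by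
    rw [hP]; exact monic_prod_of_monic _ _ fun i _ => monic_X_sub_C _
  have hdeg : P.natDegree = k := by
    rw [hP, natDegree_prod_of_monic _ _ fun i _ => monic_X_sub_C _]
    simp
  have hck : P.coeff k = 1 := by
    have := hmonic.coeff_natDegree; rwa [hdeg] at this
  have hck1 : P.coeff (k + 1) = 0 := coeff_eq_zero_of_natDegree_lt (by omega)
  have hre : ∀ g : ℕ → ℂ, ∑ j ∈ Finset.Icc 1 k, g (k - j) = ∑ i ∈ Finset.range k, g i := by
    intro g
    refine Finset.sum_nbij' (fun j => k - j) (fun i => k - i) ?_ ?_ ?_ ?_ ?_ <;>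
      intro a ha <;> simp only [Finset.mem_Icc, Finset.mem_range] at * <;> omega
  have hP1c : P.eval 1 = 1 + ∑ j ∈ Finset.Icc 1 k, P.coeff (k - j) := by
    rw [eval_eq_sum_range, hdeg]
    simp only [one_pow, mul_one]
    rw [Finset.sum_range_succ, hck, hre (fun i => P.coeff i)]
    ring
  have hP'1c : P.derivative.eval 1
      = (k : ℂ) + ∑ j ∈ Finset.Icc 1 k, ((k - j : ℕ) : ℂ) * P.coeff (k - j) := by
    have hdlt : P.derivative.natDegree < k + 1 := by
      have := natDegree_derivative_lt (p := P) (by omega)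
      omega
    rw [eval_eq_sum_range' hdlt]
    simp only [one_pow, mul_one, coeff_derivative]
    have e1 : ∑ i ∈ Finset.range (k + 1), P.coeff (i + 1) * ((i : ℂ) + 1)
        = ∑ m ∈ Finset.range (k + 2), P.coeff m * (m : ℂ) := by
      rw [Finset.sum_range_succ' (fun m => P.coeff m * (m : ℂ)) (k+1)]
      push_cast
      simp
    rw [e1, Finset.sum_range_succ, Finset.sum_range_succ, hck, hck1,
      hre (fun m => ((m : ℕ) : ℂ) * P.coeff m)]
    push_cast
    rw [Finset.sum_congr rfl (fun m _ => mul_comm (P.coeff m) ((m:ℂ)))]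
    ring
  -- substitute the coefficient hypothesis
  have hP1 : P.eval 1 = 1 + ∑ j ∈ Finset.Icc 1 k, ((A j : ℂ) + (B j : ℂ) * α) := by
    rw [hP1c]; congr 1; exact Finset.sum_congr rfl fun j hj => hcoef j hj
  have hP'1 : P.derivative.eval 1
      = (k : ℂ) + ∑ j ∈ Finset.Icc 1 k, ((k - j : ℕ) : ℂ) * ((A j : ℂ) + (B j : ℂ) * α) := by
    rw [hP'1c]; congr 1; exact Finset.sum_congr rfl fun j hj => by rw [hcoef j hj]
  -- Step 4 : numerator and denominator
  have hcast : ∀ j ∈ Finset.Icc 1 k, ((k - j : ℕ) : ℂ) = (k : ℂ) - (j : ℂ) := by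
    intro j hj
    simp only [Finset.mem_Icc] at hj
    push_cast [Nat.cast_sub hj.2]
    ring
  have hNum : ((n : ℂ) - k) * P.eval 1 + 2 * P.derivative.eval 1
      = (Abig : ℂ) + (Bbig : ℂ) * α := by
    have main : ∑ j ∈ Finset.Icc 1 k, (((n:ℂ)+k-2*j) * A j)
        + (∑ j ∈ Finset.Icc 1 k, (((n:ℂ)+k-2*j) * B j)) * α
        = ((n:ℂ)-k) * (∑ j ∈ Finset.Icc 1 k, ((A j:ℂ) + B j * α))
        + 2 * ∑ j ∈ Finset.Icc 1 k, ((k:ℂ)-j) * ((A j:ℂ) + B j * α) := by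
      rw [Finset.sum_mul, Finset.mul_sum, Finset.mul_sum, ← Finset.sum_add_distrib,
        ← Finset.sum_add_distrib]
      exact Finset.sum_congr rfl fun j _ => by ring
    have h2' : P.derivative.eval 1
        = (k:ℂ) + ∑ j ∈ Finset.Icc 1 k, ((k:ℂ)-j) * ((A j:ℂ) + B j * α) := by
      rw [hP'1]; congr 1; exact Finset.sum_congr rfl fun j hj => by rw [hcast j hj]
    rw [hP1, h2', hAbig, hBbig]
    push_cast
    linear_combination -main
  have hDen : P.eval 1 = (A' : ℂ) + (B' : ℂ) * α := by
    rw [hP1, hA', hB']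
    push_cast
    rw [Finset.sum_add_distrib, ← Finset.sum_mul]
    ring
  -- deriv O 1 = N / D
  have hfrac : deriv O 1
      = (((Abig : ℂ) + (Bbig : ℂ) * α)) / ((A' : ℂ) + (B' : ℂ) * α) := by
    rw [hderiv, hS, ← hNum, ← hDen]
    field_simp
    ring
  have hDne : ((A' : ℂ) + (B' : ℂ) * α) ≠ 0 := hDen ▸ hPne
  -- Step 5 : final inequalities
  set N : ℂ := (Abig : ℂ) + (Bbig : ℂ) * α with hNdef
  set D : ℂ := (A' : ℂ) + (B' : ℂ) * α with hDdef
  have hne : Bbig ^ 2 - B' ^ 2 ≠ 0 := ne_of_gt hBpos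
  have habs : ‖N‖ ^ 2 - ‖D‖ ^ 2
      = (Bbig ^ 2 - B' ^ 2) * (‖α + (c : ℂ)‖ ^ 2 - ρ ^ 2) := by
    rw [Complex.sq_norm, Complex.sq_norm, Complex.sq_norm, hNdef, hDdef,
      Complex.normSq_apply, Complex.normSq_apply, Complex.normSq_apply]
    simp only [Complex.add_re, Complex.add_im, Complex.mul_re, Complex.mul_im,
      Complex.ofReal_re, Complex.ofReal_im]
    rw [hc, hρ]
    field_simp
    ring
  have hd0 : 0 < ‖D‖ := norm_pos_iff.mpr hDne
  have hquot : ‖deriv O 1‖ = ‖N‖ / ‖D‖ := by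
    rw [hfrac]; exact norm_div _ _
  have hlt : ‖deriv O 1‖ < 1 ↔ ‖α + (c : ℂ)‖ < |ρ| := by
    rw [hquot, div_lt_one hd0,
      ← pow_lt_pow_iff_left₀ (norm_nonneg N) (norm_nonneg D) two_ne_zero,
      ← pow_lt_pow_iff_left₀ (norm_nonneg _) (abs_nonneg ρ) two_ne_zero,
      sq_abs]
    constructor <;> intro h <;> nlinarith [habs]
  have hgt : ‖deriv O 1‖ > 1 ↔ ‖α + (c : ℂ)‖ > |ρ| := by
    rw [hquot, gt_iff_lt, one_lt_div hd0,
      ← pow_lt_pow_iff_left₀ (norm_nonneg D) (norm_nonneg N) two_ne_zero]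
    rw [gt_iff_lt, ← pow_lt_pow_iff_left₀ (abs_nonneg ρ) (norm_nonneg _) two_ne_zero,
      sq_abs]
    constructor <;> intro h <;> nlinarith [habs]
  exact ⟨hlt, stmt15_eqhelp hlt hgt, hgt⟩
end

section
/- Let n ≥ 1, k ≥ 1, let A_1, …, A_k, B_1, …, B_k ∈ ℝ and α ∈ ℂ, and let r_1, …, r_k ∈ ℂ with r_i ≠ 1 for all i, such that the coefficients a_j of P(X) = ∏_{i=1}^k (X − r_i) = X^k + a_1 X^{k−1} + ⋯ + a_k satisfy a_j = A_j + B_j·α for j = 1, …, k. Let O(z) = z^n·∏_{i=1}^k (z − r_i)/(1 − r_i z), and set A = n + k + ∑_{j=1}^k (n+k−2j)A_j, B = ∑_{j=1}^k (n+k−2j)B_j, A' = 1 + ∑_{j=1}^k A_j, B' = ∑_{j=1}^k B_j. If B = 0 and B' = 0, then: |O'(1)| < 1 if and only if |A| < |A'|; |O'(1)| = 1 if and only if |A| = |A'|; and |O'(1)| > 1 if and only if |A| > |A'|. That is, the fixed point z = 1 is attracting iff |A| < |A'|, indifferent iff |A| = |A'|, and repelling iff |A| > |A'|. -/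
open Polynomial

/-- Same setting as Statement 15 (linear dependence
`a_j = A_j + B_j·α` of the coefficients of `P(X) = ∏ (X − rᵢ)` on the parameter `α`).
If `B = ∑(n+k−2j)B_j = 0` and `B' = ∑B_j = 0`, then the fixed point `z = 1` of
`O(z) = z^n·∏ (z − rᵢ)/(1 − rᵢz)` is attracting iff `|A| < |A'|`, indifferent iff
`|A| = |A'|`, and repelling iff `|A| > |A'|`, where `A = n+k+∑(n+k−2j)A_j` and
`A' = 1+∑A_j`. -/
theorem stmt16 (n k : ℕ) (hn : 1 ≤ n) (hk : 1 ≤ k)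
    (A B : ℕ → ℝ) (α : ℂ)
    (r : Fin k → ℂ) (hr : ∀ i, r i ≠ 1)
    (P : Polynomial ℂ) (hP : P = ∏ i, (X - C (r i)))
    (hcoef : ∀ j ∈ Finset.Icc 1 k, P.coeff (k - j) = (A j : ℂ) + (B j : ℂ) * α)
    (O : ℂ → ℂ) (hO : ∀ z : ℂ, O z = z ^ n * ∏ i, (z - r i) / (1 - r i * z))
    (Abig Bbig A' B' : ℝ)
    (hAbig : Abig = (n : ℝ) + (k : ℝ) + ∑ j ∈ Finset.Icc 1 k, ((n : ℝ) + (k : ℝ) - 2 * (j : ℝ)) * A j)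
    (hBbig : Bbig = ∑ j ∈ Finset.Icc 1 k, ((n : ℝ) + (k : ℝ) - 2 * (j : ℝ)) * B j)
    (hA' : A' = 1 + ∑ j ∈ Finset.Icc 1 k, A j)
    (hB' : B' = ∑ j ∈ Finset.Icc 1 k, B j)
    (hB0 : Bbig = 0) (hB'0 : B' = 0) :
    (‖deriv O 1‖ < 1 ↔ |Abig| < |A'|) ∧
    (‖deriv O 1‖ = 1 ↔ |Abig| = |A'|) ∧
    (‖deriv O 1‖ > 1 ↔ |Abig| > |A'|) := by
  classical
  have h1 : ∀ i, (1 : ℂ) - r i ≠ 0 := fun i => sub_ne_zero.2 (Ne.symm (hr i))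
  -- the derivative of O at 1
  set d : ℂ := (n : ℂ) + ∑ i, (1 + r i) / (1 - r i) with hd
  have hprod : HasDerivAt (fun z : ℂ => ∏ i, (z - r i) / (1 - r i * z))
      (∑ i, (1 + r i) / (1 - r i)) 1 := by
    have hQ : ∀ i, HasDerivAt (fun z : ℂ => (z - r i) / (1 - r i * z))
        ((1 + r i) / (1 - r i)) 1 := by
      intro i
      have hc : HasDerivAt (fun z : ℂ => z - r i) 1 1 :=
        (hasDerivAt_id 1).sub_const _
      have hdd : HasDerivAt (fun z : ℂ => 1 - r i * z) (-(r i)) 1 := by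
        simpa using ((hasDerivAt_id (1:ℂ)).const_mul (r i)).const_sub 1
      have := hc.fun_div hdd (by simpa using h1 i)
      refine this.congr_deriv (Eq.symm ?_)
      have := h1 i
      field_simp
      ring
    have := HasDerivAt.fun_finsetProd (u := Finset.univ)
        (f := fun i (z : ℂ) => (z - r i) / (1 - r i * z))
        (f' := fun i => (1 + r i) / (1 - r i)) (fun i _ => hQ i)
    refine this.congr_deriv (Eq.symm ?_)
    rw [Finset.sum_congr rfl]
    intro i _
    rw [smul_eq_mul]
    have hone : ∀ j, ((1:ℂ) - r j) / (1 - r j * 1) = 1 := by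
      intro j; rw [mul_one, div_self (h1 j)]
    rw [Finset.prod_congr rfl (fun j _ => hone j), Finset.prod_const_one, one_mul]
  have hpow : HasDerivAt (fun z : ℂ => z ^ n) ((n : ℂ)) 1 := by
    simpa using hasDerivAt_pow n (1 : ℂ)
  have hD : HasDerivAt O d 1 := by
    have hOfun : O = fun z : ℂ => z ^ n * ∏ i, (z - r i) / (1 - r i * z) := funext hO
    rw [hOfun]
    have := hpow.fun_mul hprod
    refine this.congr_deriv (Eq.symm ?_)
    have hone : ∀ j, ((1:ℂ) - r j) / (1 - r j * 1) = 1 := by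
      intro j; rw [mul_one, div_self (h1 j)]
    rw [Finset.prod_congr rfl (fun j _ => hone j), Finset.prod_const_one, one_pow,
      mul_one, one_mul]
  have hderiv : deriv O 1 = d := hD.deriv
  -- polynomial facts
  have hmon : P.Monic := by
    rw [hP]; exact monic_prod_of_monic _ _ (fun i _ => monic_X_sub_C (r i))
  have hdeg : P.natDegree = k := by
    rw [hP, natDegree_prod_of_monic _ _ (fun i _ => monic_X_sub_C (r i))]
    simp
  have hck : P.coeff k = 1 := by rw [← hdeg]; exact hmon.coeff_natDegree
  have heval1 : P.eval 1 = ∏ i, (1 - r i) := by simp [hP, eval_prod]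
  have hDen0 : P.eval 1 ≠ 0 := by
    rw [heval1]; exact Finset.prod_ne_zero_iff.2 fun i _ => h1 i
  -- eval 1 in terms of coefficients
  have hc1 : P.eval 1 = 1 + ∑ j ∈ Finset.Icc 1 k, P.coeff (k - j) := by
    have h1e : P.eval 1 = ∑ m ∈ Finset.range (k + 1), P.coeff m := by
      rw [eval_eq_sum_range, hdeg]; simp
    rw [h1e, Finset.sum_range_succ, hck, add_comm]
    congr 1
    refine Finset.sum_nbij' (i := fun m => k - m) (j := fun j => k - j) ?_ ?_ ?_ ?_ ?_
    · intro m hm; simp only [Finset.mem_range] at hm; simp only [Finset.mem_Icc]; omega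
    · intro j hj; simp only [Finset.mem_Icc] at hj; simp only [Finset.mem_range]; omega
    · intro m hm; simp only [Finset.mem_range] at hm; omega
    · intro j hj; simp only [Finset.mem_Icc] at hj; omega
    · intro m hm; simp only [Finset.mem_range] at hm; congr 1; omega
  -- derivative eval 1 in terms of coefficients
  have hder_coeff : P.derivative.eval 1
      = (k : ℂ) + ∑ j ∈ Finset.Icc 1 k, ((k : ℂ) - (j : ℂ)) * P.coeff (k - j) := by
    have hlt : (derivative P).natDegree < k + 1 :=
      lt_of_le_of_lt (natDegree_derivative_le P) (by omega)
    have h1e : P.derivative.eval 1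
        = ∑ m ∈ Finset.range (k + 1), P.coeff (m + 1) * ((m : ℂ) + 1) := by
      rw [eval_eq_sum_range' hlt]
      simp [coeff_derivative]
    have hzero : P.coeff (k + 1) = 0 :=
      coeff_eq_zero_of_natDegree_lt (by omega)
    have h2e : P.derivative.eval 1 = ∑ m ∈ Finset.range (k + 1), (m : ℂ) * P.coeff m := by
      rw [h1e]
      calc ∑ m ∈ Finset.range (k + 1), P.coeff (m + 1) * ((m : ℂ) + 1)
          = ∑ m ∈ Finset.range (k + 1), (((m + 1 : ℕ)) : ℂ) * P.coeff (m + 1) := by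
            refine Finset.sum_congr rfl fun m _ => ?_; push_cast; ring
        _ = ∑ m ∈ Finset.range (k + 2), (m : ℂ) * P.coeff m := by
            rw [Finset.sum_range_succ' (fun m => (m : ℂ) * P.coeff m) (k + 1)]
            simp
        _ = ∑ m ∈ Finset.range (k + 1), (m : ℂ) * P.coeff m := by
            rw [Finset.sum_range_succ, hzero]
            simp
    rw [h2e, Finset.sum_range_succ, hck, mul_one, add_comm]
    congr 1
    refine Finset.sum_nbij' (i := fun m => k - m) (j := fun j => k - j) ?_ ?_ ?_ ?_ ?_
    · intro m hm; simp only [Finset.mem_range] at hm; simp only [Finset.mem_Icc]; omega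
    · intro j hj; simp only [Finset.mem_Icc] at hj; simp only [Finset.mem_range]; omega
    · intro m hm; simp only [Finset.mem_range] at hm; omega
    · intro j hj; simp only [Finset.mem_Icc] at hj; omega
    · intro m hm; simp only [Finset.mem_range] at hm
      have h1' : k - (k - m) = m := by omega
      have h2' : ((k : ℂ) - ((k - m : ℕ) : ℂ)) = (m : ℂ) := by
        have : ((k - m : ℕ) : ℂ) = (k : ℂ) - m := by
          push_cast [Nat.cast_sub (by omega : m ≤ k)]; ring
        rw [this]; ring
      rw [h1', h2']
  -- derivative eval 1 as sum of products
  have hder_eval : P.derivative.eval 1 = ∑ i, ∏ j ∈ Finset.univ.erase i, (1 - r j) := by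
    have hg : HasDerivAt (fun z : ℂ => ∏ i, (z - r i))
        (∑ i, ∏ j ∈ Finset.univ.erase i, (1 - r j)) 1 := by
      have := HasDerivAt.fun_finsetProd (u := Finset.univ)
          (f := fun (i : Fin k) (z : ℂ) => z - r i) (f' := fun _ => 1)
          (fun i _ => (hasDerivAt_id 1).sub_const _)
      simpa using this
    have hg' : HasDerivAt (fun z : ℂ => ∏ i, (z - r i)) (P.derivative.eval 1) 1 := by
      have hp := P.hasDerivAt (1 : ℂ)
      have heq : (fun z : ℂ => P.eval z) = fun z : ℂ => ∏ i, (z - r i) := by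
        funext z; rw [hP]; simp [eval_prod]
      rwa [heq] at hp
    exact hg'.unique hg
  have hS : (∑ i, 1 / (1 - r i)) * P.eval 1 = P.derivative.eval 1 := by
    rw [heval1, hder_eval, Finset.sum_mul]
    refine Finset.sum_congr rfl fun i _ => ?_
    rw [← Finset.mul_prod_erase _ _ (Finset.mem_univ i), one_div,
      inv_mul_cancel_left₀ (h1 i)]
  -- d rewritten
  have hdval : d = (n : ℂ) - k + 2 * ∑ i, 1 / (1 - r i) := by
    rw [hd]
    have hterm : ∀ i, (1 + r i) / (1 - r i) = 2 * (1 / (1 - r i)) - 1 := by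
      intro i; have h := h1 i; field_simp; ring
    rw [Finset.sum_congr rfl fun i _ => hterm i]
    rw [Finset.sum_sub_distrib, ← Finset.mul_sum, Finset.sum_const, Finset.card_univ,
      Fintype.card_fin]
    push_cast
    ring
  -- main identity : d * P.eval 1 = numerator
  have hmain : d * P.eval 1
      = (n : ℂ) + (k : ℂ) + ∑ j ∈ Finset.Icc 1 k,
          ((n : ℂ) + (k : ℂ) - 2 * (j : ℂ)) * P.coeff (k - j) := by
    have : d * P.eval 1 = ((n : ℂ) - k) * P.eval 1 + 2 * P.derivative.eval 1 := by
      rw [hdval, ← hS]; ring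
    rw [this, hc1, hder_coeff]
    have hsum : ∑ j ∈ Finset.Icc 1 k, ((n : ℂ) + (k : ℂ) - 2 * (j : ℂ)) * P.coeff (k - j)
        = ∑ j ∈ Finset.Icc 1 k, (((n : ℂ) - k) * P.coeff (k - j)
            + 2 * (((k : ℂ) - j) * P.coeff (k - j))) := by
      refine Finset.sum_congr rfl fun j _ => ?_; ring
    rw [hsum, Finset.sum_add_distrib, ← Finset.mul_sum, ← Finset.mul_sum]
    ring
  -- substitute coefficients
  have hsub : ∑ j ∈ Finset.Icc 1 k, P.coeff (k - j)
      = ((∑ j ∈ Finset.Icc 1 k, A j : ℝ) : ℂ) + ((∑ j ∈ Finset.Icc 1 k, B j : ℝ) : ℂ) * α := by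
    rw [Finset.sum_congr rfl hcoef]
    push_cast
    rw [Finset.sum_add_distrib, ← Finset.sum_mul]
  have hA'c : P.eval 1 = (A' : ℂ) := by
    rw [hc1, hsub, ← hB', hB'0, hA']
    push_cast
    ring
  have hsub2 : ∑ j ∈ Finset.Icc 1 k, ((n : ℂ) + (k : ℂ) - 2 * (j : ℂ)) * P.coeff (k - j)
      = ((∑ j ∈ Finset.Icc 1 k, ((n : ℝ) + (k : ℝ) - 2 * (j : ℝ)) * A j : ℝ) : ℂ)
        + ((∑ j ∈ Finset.Icc 1 k, ((n : ℝ) + (k : ℝ) - 2 * (j : ℝ)) * B j : ℝ) : ℂ) * α := by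
    rw [Finset.sum_congr rfl (fun j hj => by rw [hcoef j hj])]
    push_cast
    have hstep : ∀ j ∈ Finset.Icc 1 k,
        ((n : ℂ) + k - 2 * j) * ((A j : ℂ) + (B j : ℂ) * α)
          = ((n : ℂ) + k - 2 * j) * (A j : ℂ) + (((n : ℂ) + k - 2 * j) * (B j : ℂ)) * α := by
      intro j _; ring
    rw [Finset.sum_congr rfl hstep, Finset.sum_add_distrib, ← Finset.sum_mul]
  have hAbigc : d * P.eval 1 = (Abig : ℂ) := by
    rw [hmain, hsub2, ← hBbig, hB0, hAbig]
    push_cast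
    ring
  have hA'0C : (A' : ℂ) ≠ 0 := hA'c ▸ hDen0
  have hA'0 : A' ≠ 0 := fun h => hA'0C (by rw [h]; simp)
  have hdeq : d = (Abig : ℂ) / (A' : ℂ) := by
    rw [eq_div_iff hA'0C, ← hA'c]
    exact hAbigc
  have habs : ‖deriv O 1‖ = |Abig| / |A'| := by
    rw [hderiv, hdeq, norm_div, Complex.norm_real, Complex.norm_real, Real.norm_eq_abs, Real.norm_eq_abs]
  have hpos : 0 < |A'| := abs_pos.2 hA'0
  refine ⟨?_, ?_, ?_⟩ <;> rw [habs]
  · exact div_lt_one hpos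
  · rw [div_eq_one_iff_eq (ne_of_gt hpos)]
  · exact one_lt_div hpos
end

section
/- Let n ≥ 1, k ≥ 1, let A_1, …, A_k, B_1, …, B_k ∈ ℝ and α ∈ ℂ, and let r_1, …, r_k ∈ ℂ with r_i ≠ 1 for all i, such that the coefficients a_j of P(X) = ∏_{i=1}^k (X − r_i) = X^k + a_1 X^{k−1} + ⋯ + a_k satisfy a_j = A_j + B_j·α for j = 1, …, k. Let O(z) = z^n·∏_{i=1}^k (z − r_i)/(1 − r_i z), and set A = n + k + ∑_{j=1}^k (n+k−2j)A_j and B = ∑_{j=1}^k (n+k−2j)B_j. If B ≠ 0 and α = −A/B, then O'(1) = 0, i.e. the fixed point z = 1 is superattracting. -/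
open Polynomial

/-- Same setting as Statement 15 (linear dependence
`a_j = A_j + B_j·α` of the coefficients of `P(X) = ∏ (X − rᵢ)` on the parameter `α`).
With `A = n+k+∑(n+k−2j)A_j` and `B = ∑(n+k−2j)B_j`, if `B ≠ 0` and `α = −A/B`, then
`O'(1) = 0`, i.e. the fixed point `z = 1` of `O(z) = z^n·∏ (z − rᵢ)/(1 − rᵢz)` is
superattracting. -/
theorem stmt17 (n k : ℕ) (hn : 1 ≤ n) (hk : 1 ≤ k)
    (A B : ℕ → ℝ) (α : ℂ)
    (r : Fin k → ℂ) (hr : ∀ i, r i ≠ 1)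
    (P : Polynomial ℂ) (hP : P = ∏ i, (X - C (r i)))
    (hcoef : ∀ j ∈ Finset.Icc 1 k, P.coeff (k - j) = (A j : ℂ) + (B j : ℂ) * α)
    (O : ℂ → ℂ) (hO : ∀ z : ℂ, O z = z ^ n * ∏ i, (z - r i) / (1 - r i * z))
    (Abig Bbig : ℝ)
    (hAbig : Abig = (n : ℝ) + (k : ℝ) + ∑ j ∈ Finset.Icc 1 k, ((n : ℝ) + (k : ℝ) - 2 * (j : ℝ)) * A j)
    (hBbig : Bbig = ∑ j ∈ Finset.Icc 1 k, ((n : ℝ) + (k : ℝ) - 2 * (j : ℝ)) * B j)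
    (hBne : Bbig ≠ 0) (hα : α = ((-(Abig / Bbig) : ℝ) : ℂ)) :
    deriv O 1 = 0 := by
  classical
  have hPmonic : P.Monic := by
    rw [hP]; exact monic_prod_of_monic _ _ fun i _ => monic_X_sub_C _
  have hdeg : P.natDegree = k := by
    rw [hP, natDegree_prod _ _ fun i _ => X_sub_C_ne_zero (r i)]
    simp
  set S : ℂ := ∏ i, (1 - r i) with hSdef
  have hPS : P.eval 1 = S := by
    simp [hP, hSdef, eval_prod]
  have hSne : S ≠ 0 := by
    refine Finset.prod_ne_zero_iff.mpr fun i _ => ?_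
    simpa [sub_ne_zero] using (hr i).symm
  set T : ℂ := (derivative P).eval 1 with hTdef
  set D1 : ℂ := ∑ i, ∏ j ∈ Finset.univ.erase i, (1 - r j) with hD1
  set D2 : ℂ := ∑ i, (∏ j ∈ Finset.univ.erase i, (1 - r j)) * (-(r i)) with hD2
  -- analytic derivatives of the two products at 1
  have hp2 : HasDerivAt (fun z : ℂ => ∏ i, (z - r i)) D1 1 := by
    have := HasDerivAt.fun_finsetProd (u := Finset.univ)
      (f := fun (i : Fin k) (z : ℂ) => z - r i) (f' := fun _ => (1 : ℂ)) (x := (1 : ℂ))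
      (fun i _ => (hasDerivAt_id 1).sub_const (r i))
    simpa [hD1] using this
  have hq2 : HasDerivAt (fun z : ℂ => ∏ i, (1 - r i * z)) D2 1 := by
    have := HasDerivAt.fun_finsetProd (u := Finset.univ)
      (f := fun (i : Fin k) (z : ℂ) => 1 - r i * z) (f' := fun i => -(r i)) (x := (1 : ℂ))
      (fun i _ => by simpa using (((hasDerivAt_id (1:ℂ)).const_mul (r i)).const_sub 1))
    simpa [hD2, mul_comm] using this
  -- T = D1 by uniqueness of derivatives
  have hfq : (fun z : ℂ => eval z P) = fun z : ℂ => ∏ i, (z - r i) := by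
    funext z; rw [hP, eval_prod]; simp
  have hTD : T = D1 := by
    have hp1 : HasDerivAt (fun z : ℂ => eval z P) T 1 := Polynomial.hasDerivAt P 1
    rw [hfq] at hp1
    exact hp1.unique hp2
  -- sum identity D1 + D2 = k * S
  have hDD : D1 + D2 = (k : ℂ) * S := by
    rw [hD1, hD2, ← Finset.sum_add_distrib]
    have hterm : ∀ i : Fin k, (∏ j ∈ Finset.univ.erase i, (1 - r j))
        + (∏ j ∈ Finset.univ.erase i, (1 - r j)) * (-(r i)) = S := by
      intro i
      have h := Finset.prod_erase_mul Finset.univ (fun j => (1 : ℂ) - r j) (Finset.mem_univ i)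
      rw [hSdef]
      linear_combination h
    rw [Finset.sum_congr rfl fun i _ => hterm i]
    simp [mul_comm]
  -- O as a quotient
  have hOeq : O = fun z => (z ^ n * ∏ i, (z - r i)) / ∏ i, (1 - r i * z) := by
    funext z
    rw [hO z, Finset.prod_div_distrib, mul_div_assoc]
  -- denominator at 1
  have hden1 : (∏ i, ((1 : ℂ) - r i * 1)) = S := by simp [hSdef]
  have hQne : (∏ i, ((1 : ℂ) - r i * 1)) ≠ 0 := by rw [hden1]; exact hSne
  have hnum : HasDerivAt (fun z : ℂ => z ^ n * ∏ i, (z - r i))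
      ((n : ℂ) * 1 ^ (n - 1) * (∏ i, ((1 : ℂ) - r i)) + 1 ^ n * D1) 1 := by
    have := (hasDerivAt_pow n (1 : ℂ)).fun_mul hp2
    simpa using this
  have hder := (hnum.fun_div hq2 hQne).deriv
  rw [hOeq, hder]
  have hv1 : (∏ i, ((1 : ℂ) - r i)) = S := by rw [hSdef]
  have hv2 : ((1 : ℂ)) ^ n * ∏ i, ((1 : ℂ) - r i) = S := by simp [hSdef]
  -- key identity : n*S + 2*T = k*S  (from the coefficient hypothesis)
  have hck : P.coeff k = 1 := by
    have := hPmonic.coeff_natDegree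
    rwa [hdeg] at this
  have hS1 : S = ∑ m ∈ Finset.range (k + 1), P.coeff m := by
    rw [← hPS, Polynomial.eval_eq_sum_range' (by omega : P.natDegree < k + 1)]
    simp
  have hT1 : T = ∑ m ∈ Finset.range (k + 1), (m : ℂ) * P.coeff m := by
    have hd : (derivative P).natDegree < k + 1 := by
      have := Polynomial.natDegree_derivative_le P
      omega
    rw [hTdef, Polynomial.eval_eq_sum_range' hd]
    simp only [one_pow, mul_one, Polynomial.coeff_derivative]
    have h2 := Finset.sum_range_succ' (fun m => (m : ℂ) * P.coeff m) (k + 1)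
    have h3 := Finset.sum_range_succ (fun m => (m : ℂ) * P.coeff m) (k + 1)
    have h4 : P.coeff (k + 1) = 0 :=
      Polynomial.coeff_eq_zero_of_natDegree_lt (by omega)
    simp only [h4, mul_zero, add_zero, Nat.cast_zero, zero_mul] at h2 h3
    rw [← h3, h2]
    refine Finset.sum_congr rfl fun i _ => ?_
    push_cast
    ring
  have hkey0 : (n : ℂ) * S + 2 * T - (k : ℂ) * S
      = ∑ m ∈ Finset.range (k + 1), ((n : ℂ) + 2 * m - k) * P.coeff m := by
    rw [hS1, hT1, Finset.mul_sum, Finset.mul_sum, Finset.mul_sum,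
      ← Finset.sum_add_distrib, ← Finset.sum_sub_distrib]
    exact Finset.sum_congr rfl fun m _ => by ring
  have hre : ∑ m ∈ Finset.range k, ((n : ℂ) + 2 * m - k) * P.coeff m
      = ∑ j ∈ Finset.Icc 1 k, ((n : ℂ) + (k : ℂ) - 2 * j) * P.coeff (k - j) := by
    refine Finset.sum_nbij' (fun m => k - m) (fun j => k - j) ?_ ?_ ?_ ?_ ?_
    · intro m hm; simp only [Finset.mem_range] at hm; simp only [Finset.mem_Icc]; omega
    · intro j hj; simp only [Finset.mem_Icc] at hj; simp only [Finset.mem_range]; omega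
    · intro m hm; simp only [Finset.mem_range] at hm; show k - (k - m) = m; omega
    · intro j hj; simp only [Finset.mem_Icc] at hj; show k - (k - j) = j; omega
    · intro m hm
      simp only [Finset.mem_range] at hm
      have h1 : k - (k - m) = m := by omega
      have h2 : ((k - m : ℕ) : ℂ) = (k : ℂ) - m := by
        exact_mod_cast Nat.cast_sub (by omega : m ≤ k)
      show ((n : ℂ) + 2 * m - k) * P.coeff m
        = ((n : ℂ) + (k : ℂ) - 2 * ((k - m : ℕ) : ℂ)) * P.coeff (k - (k - m))
      rw [h1, h2]
      ring_nf
  have hzero : ((n : ℂ) + k) + ∑ j ∈ Finset.Icc 1 k,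
      ((n : ℂ) + (k : ℂ) - 2 * j) * ((A j : ℂ) + (B j : ℂ) * α) = 0 := by
    have hAc : ((Abig : ℝ) : ℂ)
        = (n : ℂ) + (k : ℂ) + ∑ j ∈ Finset.Icc 1 k, ((n : ℂ) + (k : ℂ) - 2 * j) * (A j : ℂ) := by
      rw [hAbig]; push_cast; ring
    have hBc : ((Bbig : ℝ) : ℂ)
        = ∑ j ∈ Finset.Icc 1 k, ((n : ℂ) + (k : ℂ) - 2 * j) * (B j : ℂ) := by
      rw [hBbig]; push_cast; ring
    have hre0 : Abig + Bbig * (-(Abig / Bbig)) = 0 := by field_simp; ring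
    have hz : ((Abig : ℝ) : ℂ) + ((Bbig : ℝ) : ℂ) * α = 0 := by
      rw [hα]; exact_mod_cast hre0
    calc ((n : ℂ) + k) + ∑ j ∈ Finset.Icc 1 k,
          ((n : ℂ) + (k : ℂ) - 2 * j) * ((A j : ℂ) + (B j : ℂ) * α)
        = ((Abig : ℝ) : ℂ) + ((Bbig : ℝ) : ℂ) * α := by
          rw [hAc, hBc, Finset.sum_mul]
          rw [show (∑ j ∈ Finset.Icc 1 k, ((n : ℂ) + (k : ℂ) - 2 * j) * ((A j : ℂ) + (B j : ℂ) * α))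
            = ∑ j ∈ Finset.Icc 1 k, (((n : ℂ) + (k : ℂ) - 2 * j) * (A j : ℂ)
              + ((n : ℂ) + (k : ℂ) - 2 * j) * (B j : ℂ) * α) from
            Finset.sum_congr rfl fun j _ => by ring]
          rw [Finset.sum_add_distrib]
          ring
      _ = 0 := hz
  have hkey : (n : ℂ) * S + 2 * T - (k : ℂ) * S = 0 := by
    rw [hkey0, Finset.sum_range_succ, hck]
    have : ∑ m ∈ Finset.range k, ((n : ℂ) + 2 * m - k) * P.coeff m
        = ∑ j ∈ Finset.Icc 1 k, ((n : ℂ) + (k : ℂ) - 2 * j) * ((A j : ℂ) + (B j : ℂ) * α) := by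
      rw [hre]
      exact Finset.sum_congr rfl fun j hj => by rw [hcoef j hj]
    rw [this]
    linear_combination hzero
  rw [hv1, hv2, hden1]
  rw [_root_.div_eq_zero_iff]
  left
  have hD2v : D2 = (k : ℂ) * S - D1 := by linear_combination hDD
  rw [hD2v, ← hTD]
  linear_combination S * hkey
end

section
/- Let n ≥ 1, k ≥ 1 with n + k odd, let A_1, …, A_k, B_1, …, B_k ∈ ℝ and α ∈ ℂ, and let r_1, …, r_k ∈ ℂ with r_i ≠ −1 for all i, such that the coefficients a_j of P(X) = ∏_{i=1}^k (X − r_i) = X^k + a_1 X^{k−1} + ⋯ + a_k satisfy a_j = A_j + B_j·α for j = 1, …, k. Let O(z) = z^n·∏_{i=1}^k (z − r_i)/(1 − r_i z), and set C = n + k + ∑_{j=1}^k (−1)^j (n+k−2j)A_j, D = ∑_{j=1}^k (−1)^j (n+k−2j)B_j, C' = 1 + ∑_{j=1}^k (−1)^j A_j, D' = ∑_{j=1}^k (−1)^j B_j, c = (CD − C'D')/(D² − D'²), ρ = (C'D − CD')/(D² − D'²). If D² − D'² > 0, then: |O'(−1)| < 1 if and only if |α + c| < |ρ|; |O'(−1)|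 = 1 if and only if |α + c| = |ρ|; and |O'(−1)| > 1 if and only if |α + c| > |ρ|. That is, the fixed point z = −1 is attracting exactly inside the circle S: |α + c| = |ρ|, indifferent on S, and repelling outside S. -/
open Polynomial

private lemma npow_sub' (a b : ℕ) (h : b ≤ a) : (-1:ℂ)^(a-b) = (-1)^a * (-1)^b := by
  have h1 : (-1:ℂ)^(a-b) * (-1)^b = (-1)^a := by rw [← pow_add, Nat.sub_add_cancel h]
  have h2 : (-1:ℂ)^b * (-1)^b = 1 := by rw [← pow_add, ← two_mul, pow_mul]; norm_num
  calc (-1:ℂ)^(a-b) = (-1)^(a-b) * ((-1)^b * (-1)^b) := by rw [h2, mul_one]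
    _ = ((-1)^(a-b) * (-1)^b) * (-1)^b := by ring
    _ = (-1)^a * (-1)^b := by rw [h1]

private theorem coeff_part (k : ℕ) (hk : 1 ≤ k) (r : Fin k → ℂ)
    (P : Polynomial ℂ) (hP : P = ∏ i, (X - C (r i))) (a : ℕ → ℂ)
    (hcoef : ∀ j ∈ Finset.Icc 1 k, P.coeff (k - j) = a j) :
    P.eval (-1) = (-1)^k * (1 + ∑ j ∈ Finset.Icc 1 k, (-1)^j * a j) ∧
    (derivative P).eval (-1)
      = (-1)^(k-1) * ((k:ℂ) + ∑ j ∈ Finset.Icc 1 k, (-1)^j * ((k:ℂ)-(j:ℂ)) * a j) := by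
  have hdeg : P.natDegree = k := by
    rw [hP, natDegree_prod _ _ fun i _ => X_sub_C_ne_zero (r i)]
    simp [natDegree_X_sub_C]
  have hmonic : P.Monic := hP ▸ monic_prod_of_monic _ _ fun i _ => monic_X_sub_C (r i)
  have hck : P.coeff k = 1 := by
    have := hmonic.coeff_natDegree
    rwa [hdeg] at this
  have hck1 : P.coeff (k+1) = 0 := coeff_eq_zero_of_natDegree_lt (by omega)
  have hIcc : ∀ g : ℕ → ℂ, ∀ m : ℕ, ∑ j ∈ Finset.Icc 1 m, g j = ∑ i ∈ Finset.range m, g (1 + i) := by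
    intro g m
    rw [← Finset.Ico_add_one_right_eq_Icc, Finset.sum_Ico_eq_sum_range]
    simp
  constructor
  · -- pe
    have h1 : P.eval (-1) = ∑ i ∈ Finset.range (k+1), P.coeff i * (-1:ℂ)^i := by
      rw [eval_eq_sum_range, hdeg]
    have h2 : ∑ i ∈ Finset.range (k+1), P.coeff i * (-1:ℂ)^i
        = ∑ j ∈ Finset.range (k+1), P.coeff (k-j) * (-1:ℂ)^(k-j) := by
      rw [← Finset.sum_range_reflect (fun i => P.coeff i * (-1:ℂ)^i) (k+1)]
      simp
    rw [h1, h2, Finset.sum_range_succ' (fun j => P.coeff (k-j) * (-1:ℂ)^(k-j)) k]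
    simp only [Nat.sub_zero, hck, one_mul]
    rw [hIcc (fun j => (-1:ℂ)^j * a j) k]
    have hterm : ∀ i ∈ Finset.range k, P.coeff (k-(i+1)) * (-1:ℂ)^(k-(i+1))
        = (-1:ℂ)^k * ((-1:ℂ)^(1+i) * a (1+i)) := by
      intro i hi
      have hik : i < k := Finset.mem_range.mp hi
      have ha := hcoef (1+i) (Finset.mem_Icc.mpr ⟨by omega, by omega⟩)
      rw [show k - (i+1) = k - (1+i) by omega, ha, npow_sub' k (1+i) (by omega)]
      ring
    rw [Finset.sum_congr rfl hterm, ← Finset.mul_sum]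
    ring
  · -- pd
    have hdlt : (derivative P).natDegree < k + 1 := by
      have := natDegree_derivative_lt (p := P) (by omega)
      omega
    have h1 : (derivative P).eval (-1) = ∑ i ∈ Finset.range (k+1), P.coeff (i+1) * ((i:ℂ)+1) * (-1:ℂ)^i := by
      rw [eval_eq_sum_range' hdlt]
      exact Finset.sum_congr rfl fun i _ => by rw [coeff_derivative]
    have h2 : ∑ i ∈ Finset.range (k+1), P.coeff (i+1) * ((i:ℂ)+1) * (-1:ℂ)^i
        = ∑ j ∈ Finset.range (k+1), P.coeff (k-j+1) * (((k-j : ℕ):ℂ)+1) * (-1:ℂ)^(k-j) := by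
      rw [← Finset.sum_range_reflect (fun i => P.coeff (i+1) * ((i:ℂ)+1) * (-1:ℂ)^i) (k+1)]
      simp
    rw [h1, h2, Finset.sum_range_succ'
      (fun j => P.coeff (k-j+1) * (((k-j : ℕ):ℂ)+1) * (-1:ℂ)^(k-j)) k]
    simp only [Nat.sub_zero, hck1, zero_mul, add_zero]
    -- now LHS = ∑ j ∈ range k, P.coeff (k-(j+1)+1) * (↑(k-(j+1))+1) * (-1)^(k-(j+1))
    have hu : ∀ j ∈ Finset.range k, P.coeff (k-(j+1)+1) * (((k-(j+1) : ℕ):ℂ)+1) * (-1:ℂ)^(k-(j+1))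
        = P.coeff (k-j) * (((k-j : ℕ):ℂ)) * (-1:ℂ)^(k-(j+1)) := by
      intro j hj
      have hjk : j < k := Finset.mem_range.mp hj
      rw [show k-(j+1)+1 = k-j by omega]
      congr 1
      push_cast [Nat.cast_sub (by omega : j+1 ≤ k), Nat.cast_sub (by omega : j ≤ k)]
      ring
    rw [Finset.sum_congr rfl hu]
    -- peel j = 0
    have hpeel := Finset.sum_range_succ'
      (fun j => P.coeff (k-j) * (((k-j : ℕ):ℂ)) * (-1:ℂ)^(k-(j+1))) (k-1)
    rw [show k-1+1 = k by omega] at hpeel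
    rw [hpeel]
    simp only [Nat.sub_zero, hck, one_mul]
    -- RHS: peel top j = k from Icc 1 k
    have htop := Finset.sum_Icc_succ_top (a := 1) (b := k-1)
      (f := fun j => (-1:ℂ)^j * ((k:ℂ)-(j:ℂ)) * a j) (by omega)
    rw [show k-1+1 = k by omega] at htop
    rw [htop]
    rw [hIcc (fun j => (-1:ℂ)^j * ((k:ℂ)-(j:ℂ)) * a j) (k-1)]
    have hterm : ∀ i ∈ Finset.range (k-1),
        P.coeff (k-(i+1)) * (((k-(i+1) : ℕ):ℂ)) * (-1:ℂ)^(k-(i+1+1))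
        = (-1:ℂ)^(k-1) * ((-1:ℂ)^(1+i) * ((k:ℂ)-((1+i : ℕ):ℂ)) * a (1+i)) := by
      intro i hi
      have hik : i < k - 1 := Finset.mem_range.mp hi
      have ha := hcoef (1+i) (Finset.mem_Icc.mpr ⟨by omega, by omega⟩)
      rw [show k - (i+1) = k - (1+i) by omega, ha,
        npow_sub' k (i+1+1) (by omega), npow_sub' k 1 (by omega)]
      push_cast [Nat.cast_sub (by omega : 1+i ≤ k)]
      ring
    rw [Finset.sum_congr rfl (fun i hi => hterm i hi), ← Finset.mul_sum]
    simp only [Nat.sub_zero, Nat.zero_add, hck, one_mul]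
    ring

private theorem deriv_part (n k : ℕ) (hn : 1 ≤ n) (hk : 1 ≤ k) (hodd : Odd (n + k))
    (r : Fin k → ℂ) (hr : ∀ i, r i ≠ -1)
    (P : Polynomial ℂ) (hP : P = ∏ i, (X - C (r i)))
    (O : ℂ → ℂ) (hO : ∀ z : ℂ, O z = z ^ n * ∏ i, (z - r i) / (1 - r i * z)) :
    deriv O (-1) = (((n:ℂ) - k) * P.eval (-1) - 2 * (derivative P).eval (-1)) / P.eval (-1) := by
  have hs : ∀ i, (1 : ℂ) + r i ≠ 0 := fun i h => hr i (by linear_combination h)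
  have hPe : ∀ z : ℂ, P.eval z = ∏ i, (z - r i) := by
    intro z; rw [hP, eval_prod]; simp
  set pe := P.eval (-1) with hpe_def
  set pd := (derivative P).eval (-1) with hpd_def
  set K := (-1 : ℂ) ^ k with hK
  set qe : ℂ := ∏ i, (1 + r i) with hqe
  set qd : ℂ := ∑ i, (∏ j ∈ Finset.univ.erase i, (1 + r j)) * (-(r i)) with hqd_def
  have hqe0 : qe ≠ 0 := Finset.prod_ne_zero_iff.mpr fun i _ => hs i
  have hpeK : pe = K * qe := by
    rw [hpe_def, hPe, hqe, hK]
    rw [show (∏ i, ((-1:ℂ) - r i)) = ∏ i : Fin k, ((-1) * (1 + r i)) from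
      Finset.prod_congr rfl fun i _ => by ring]
    rw [Finset.prod_mul_distrib, Finset.prod_const, Finset.card_univ, Fintype.card_fin]
  have hK2 : K * K = 1 := by
    rw [hK, ← pow_add, ← two_mul, pow_mul]; norm_num
  have hpe0 : pe ≠ 0 := by
    rw [hpeK]
    exact mul_ne_zero (by rw [hK]; exact pow_ne_zero _ (by norm_num)) hqe0
  have hqeK : qe = K * pe := by rw [hpeK, ← mul_assoc, hK2, one_mul]
  -- derivative of denominator product
  have hden : HasDerivAt (fun z : ℂ => ∏ i, (1 - r i * z)) qd (-1) := by
    have h : ∀ i ∈ Finset.univ, HasDerivAt (fun z : ℂ => 1 - r i * z) (-(r i)) (-1 : ℂ) := by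
      intro i _
      simpa using ((hasDerivAt_id (-1:ℂ)).const_mul (r i)).const_sub 1
    have h2 := HasDerivAt.fun_finsetProd h
    refine h2.congr_deriv ?_
    rw [hqd_def]
    refine Finset.sum_congr rfl fun i _ => ?_
    rw [smul_eq_mul]
    congr 1
    exact Finset.prod_congr rfl fun j _ => by ring
  -- derivative of numerator
  have hnum : HasDerivAt (fun z : ℂ => z ^ n * P.eval z)
      (((n : ℂ) * (-1)^(n-1)) * pe + (-1)^n * pd) (-1) :=
    (hasDerivAt_pow n (-1)).mul (P.hasDerivAt (-1))
  have hdval : (∏ i, (1 - r i * (-1:ℂ))) = qe :=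
    Finset.prod_congr rfl fun i _ => by ring
  have hOfun : O = fun z => (z ^ n * P.eval z) / ∏ i, (1 - r i * z) := by
    funext z
    rw [hO, Finset.prod_div_distrib, ← mul_div_assoc, hPe]
  have hOder : HasDerivAt O
      (((((n : ℂ) * (-1)^(n-1)) * pe + (-1)^n * pd) * qe - ((-1:ℂ)^n * pe) * qd) / qe ^ 2) (-1) := by
    rw [hOfun]
    have := hnum.fun_div hden (by rw [hdval]; exact hqe0)
    simpa [hdval, hpe_def] using this
  -- pd as a sum of products
  have hpd_prod : pd = ∑ i, ∏ j ∈ Finset.univ.erase i, (-1 - r j) := by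
    have h1 : ∀ i ∈ Finset.univ, HasDerivAt (fun z : ℂ => z - r i) 1 (-1 : ℂ) := by
      intro i _
      simpa using (hasDerivAt_id (-1:ℂ)).sub_const (r i)
    have h2 := HasDerivAt.fun_finsetProd h1
    have h3 : HasDerivAt (fun z : ℂ => ∏ i, (z - r i)) pd (-1) := by
      have h4 := P.hasDerivAt (-1)
      simp only [hPe] at h4
      exact h4
    have := h3.unique h2
    rw [this]
    refine Finset.sum_congr rfl fun i _ => ?_
    rw [smul_eq_mul, mul_one]
  -- qd in terms of pe, pd
  have hqd : qd = K * (-((k:ℂ) * pe) - pd) := by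
    have herase : ∀ i : Fin k, (∏ j ∈ Finset.univ.erase i, ((1:ℂ) + r j))
        = (-1:ℂ)^(k-1) * ∏ j ∈ Finset.univ.erase i, (-1 - r j) := by
      intro i
      have hcard : (Finset.univ.erase i).card = k - 1 := by
        rw [Finset.card_erase_of_mem (Finset.mem_univ i), Finset.card_univ, Fintype.card_fin]
      have : (∏ j ∈ Finset.univ.erase i, ((-1:ℂ) - r j))
          = (-1:ℂ)^(k-1) * ∏ j ∈ Finset.univ.erase i, (1 + r j) := by
        rw [show (∏ j ∈ Finset.univ.erase i, ((-1:ℂ) - r j))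
            = ∏ j ∈ Finset.univ.erase i, ((-1) * (1 + r j)) from
          Finset.prod_congr rfl fun j _ => by ring]
        rw [Finset.prod_mul_distrib, Finset.prod_const, hcard]
      rw [this, ← mul_assoc, ← pow_add]
      have : (-1:ℂ)^(k-1+(k-1)) = 1 := Even.neg_one_pow ⟨k-1, rfl⟩
      rw [this, one_mul]
    have hterm : ∀ i : Fin k, (∏ j ∈ Finset.univ.erase i, ((1:ℂ) + r j)) * (-(r i))
        = K * (-pe - ∏ j ∈ Finset.univ.erase i, (-1 - r j)) := by
      intro i
      have hmul : (∏ j ∈ Finset.univ.erase i, ((-1:ℂ) - r j)) * (-1 - r i) = pe := by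
        rw [hpe_def, hPe]
        exact Finset.prod_erase_mul _ _ (Finset.mem_univ i)
      have hKsplit : (-1:ℂ)^(k-1) * (-1) = K := by
        rw [hK, ← pow_succ]; congr 1; omega
      calc (∏ j ∈ Finset.univ.erase i, ((1:ℂ) + r j)) * (-(r i))
          = ((-1:ℂ)^(k-1) * (-1)) * ((∏ j ∈ Finset.univ.erase i, (-1 - r j)) * (r i)) := by
            rw [herase i]; ring
        _ = K * ((∏ j ∈ Finset.univ.erase i, (-1 - r j)) * (r i)) := by rw [hKsplit]
        _ = K * (-pe - ∏ j ∈ Finset.univ.erase i, (-1 - r j)) := by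
            rw [← hmul]; ring
    rw [hqd_def]
    rw [Finset.sum_congr rfl fun i _ => hterm i]
    rw [← Finset.mul_sum]
    congr 1
    rw [Finset.sum_sub_distrib, Finset.sum_const, Finset.card_univ, Fintype.card_fin, ← hpd_prod,
      nsmul_eq_mul]
    ring
  -- (-1)^(n-1) = K, (-1)^n = -K
  have hEK : (-1:ℂ)^(n-1) = K := by
    obtain ⟨m, hm⟩ := hodd
    have hA : (-1:ℂ)^(n-1) * K = 1 := by
      rw [hK, ← pow_add]
      exact Even.neg_one_pow ⟨m, by omega⟩
    calc (-1:ℂ)^(n-1) = (-1:ℂ)^(n-1) * (K * K) := by rw [hK2, mul_one]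
      _ = ((-1:ℂ)^(n-1) * K) * K := by ring
      _ = K := by rw [hA, one_mul]
  have hN : (-1:ℂ)^n = -K := by
    rw [show n = (n-1)+1 by omega, pow_succ, hEK]; ring
  rw [hOder.deriv, hqd, hqeK, hEK, hN]
  have hsq : (K * pe) ^ 2 = pe ^ 2 := by
    rw [mul_pow, sq K, hK2, one_mul]
  rw [hsq]
  have key : ((((n:ℂ) * K) * pe + (-K) * pd) * (K * pe) - ((-K) * pe) * (K * (-((k:ℂ)*pe) - pd)))
      = (((n:ℂ) - k) * pe - 2 * pd) * pe := by
    linear_combination (((n:ℂ) - k) * pe * pe - 2 * pe * pd) * hK2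
  rw [key, sq, mul_div_mul_right _ _ hpe0]

private theorem final_part (Cbig Dbig C' D' c ρ : ℝ) (α : ℂ)
    (hc : c = (Cbig * Dbig - C' * D') / (Dbig ^ 2 - D' ^ 2))
    (hρ : ρ = (C' * Dbig - Cbig * D') / (Dbig ^ 2 - D' ^ 2))
    (hDpos : Dbig ^ 2 - D' ^ 2 > 0)
    (hv0 : (C' : ℂ) + (D' : ℂ) * α ≠ 0)
    (w : ℂ) (hw : w = ((Cbig : ℂ) + (Dbig : ℂ) * α) / ((C' : ℂ) + (D' : ℂ) * α)) :
    (‖w‖ < 1 ↔ ‖α + (c : ℂ)‖ < |ρ|) ∧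
    (‖w‖ = 1 ↔ ‖α + (c : ℂ)‖ = |ρ|) ∧
    (‖w‖ > 1 ↔ ‖α + (c : ℂ)‖ > |ρ|) := by
  have hD0 : Dbig ^ 2 - D' ^ 2 ≠ 0 := ne_of_gt hDpos
  set u : ℂ := (Cbig : ℂ) + (Dbig : ℂ) * α with hu
  set v : ℂ := (C' : ℂ) + (D' : ℂ) * α with hv
  have hkey : Complex.normSq u - Complex.normSq v
      = (Dbig ^ 2 - D' ^ 2) * (Complex.normSq (α + (c : ℂ)) - ρ ^ 2) := by
    simp only [hu, hv, Complex.normSq_apply, Complex.add_re, Complex.add_im, Complex.mul_re,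
      Complex.mul_im, Complex.ofReal_re, Complex.ofReal_im]
    rw [hc, hρ]
    field_simp
    ring
  have hvpos : 0 < ‖v‖ := norm_pos_iff.mpr hv0
  have habsw : ‖w‖ = ‖u‖ / ‖v‖ := by rw [hw, norm_div]
  have hsq : ∀ x y : ℝ, 0 ≤ x → 0 ≤ y → (x < y ↔ x ^ 2 < y ^ 2) :=
    fun x y hx hy => (pow_lt_pow_iff_left₀ hx hy two_ne_zero).symm
  have hXlt : Complex.normSq u < Complex.normSq v
      ↔ Complex.normSq (α + (c : ℂ)) < ρ ^ 2 := by
    rw [← sub_neg, hkey, ← sub_neg (b := ρ ^ 2)]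
    constructor
    · intro h
      by_contra hcon
      push_neg at hcon
      exact absurd h (not_lt.mpr (mul_nonneg hDpos.le hcon))
    · intro h
      exact mul_neg_of_pos_of_neg hDpos h
  have hlt : ‖w‖ < 1 ↔ ‖α + (c : ℂ)‖ < |ρ| := by
    rw [habsw, div_lt_one hvpos,
      hsq _ _ (norm_nonneg u) (norm_nonneg v),
      Complex.sq_norm, Complex.sq_norm,
      hsq _ _ (norm_nonneg _) (abs_nonneg ρ), Complex.sq_norm, sq_abs]
    exact hXlt
  have hgt : ‖w‖ > 1 ↔ ‖α + (c : ℂ)‖ > |ρ| := by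
    rw [habsw, gt_iff_lt, lt_div_iff₀ hvpos, one_mul,
      hsq _ _ (norm_nonneg v) (norm_nonneg u),
      Complex.sq_norm, Complex.sq_norm, gt_iff_lt,
      hsq _ _ (abs_nonneg ρ) (norm_nonneg _), Complex.sq_norm, sq_abs]
    constructor
    · intro h
      by_contra hcon
      push_neg at hcon
      rcases lt_or_eq_of_le hcon with h2 | h2
      · exact absurd (hXlt.mpr h2).le (not_le.mpr h)
      · have h3 : Complex.normSq u - Complex.normSq v = 0 := by rw [hkey, h2]; ring
        linarith
    · intro h
      by_contra hcon
      push_neg at hcon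
      rcases lt_or_eq_of_le hcon with h2 | h2
      · exact absurd (hXlt.mp h2).le (not_le.mpr h)
      · have h3 : (Dbig ^ 2 - D' ^ 2) * (Complex.normSq (α + (c:ℂ)) - ρ ^ 2) = 0 := by
          rw [← hkey, h2, sub_self]
        rcases mul_eq_zero.mp h3 with h4 | h4
        · exact hD0 h4
        · linarith
  refine ⟨hlt, ?_, hgt⟩
  constructor
  · intro h
    rcases lt_trichotomy (‖α + (c : ℂ)‖) |ρ| with h2 | h2 | h2
    · exact absurd (hlt.mpr h2) (by rw [h]; exact lt_irrefl 1)
    · exact h2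
    · exact absurd (hgt.mpr h2) (by rw [h]; exact lt_irrefl 1)
  · intro h
    rcases lt_trichotomy (‖w‖) 1 with h2 | h2 | h2
    · exact absurd (hlt.mp h2) (by rw [h]; exact lt_irrefl _)
    · exact h2
    · exact absurd (hgt.mp h2) (by rw [h]; exact lt_irrefl _)


/-- Stability of the fixed point `z = −1` (here `n + k` is odd) of the
Newton-like operator `O(z) = z^n·∏ (z − rᵢ)/(1 − rᵢz)` when the coefficients
`a_j = coeff (k−j)` of `P(X) = ∏ (X − rᵢ)` depend linearly on `α`: `a_j = A_j + B_j·α`.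
With `C = n+k+∑(−1)^j(n+k−2j)A_j`, `D = ∑(−1)^j(n+k−2j)B_j`, `C' = 1+∑(−1)^jA_j`,
`D' = ∑(−1)^jB_j`, `c = (CD−C'D')/(D²−D'²)`, `ρ = (C'D−CD')/(D²−D'²)`, if `D²−D'² > 0`
then `z = −1` is attracting iff `|α+c| < |ρ|`, indifferent iff `|α+c| = |ρ|`, repelling
iff `|α+c| > |ρ|`. -/
theorem stmt18 (n k : ℕ) (hn : 1 ≤ n) (hk : 1 ≤ k) (hodd : Odd (n + k))
    (A B : ℕ → ℝ) (α : ℂ)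
    (r : Fin k → ℂ) (hr : ∀ i, r i ≠ -1)
    (P : Polynomial ℂ) (hP : P = ∏ i, (X - C (r i)))
    (hcoef : ∀ j ∈ Finset.Icc 1 k, P.coeff (k - j) = (A j : ℂ) + (B j : ℂ) * α)
    (O : ℂ → ℂ) (hO : ∀ z : ℂ, O z = z ^ n * ∏ i, (z - r i) / (1 - r i * z))
    (Cbig Dbig C' D' c ρ : ℝ)
    (hCbig : Cbig = (n : ℝ) + (k : ℝ)
        + ∑ j ∈ Finset.Icc 1 k, (-1 : ℝ) ^ j * ((n : ℝ) + (k : ℝ) - 2 * (j : ℝ)) * A j)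
    (hDbig : Dbig = ∑ j ∈ Finset.Icc 1 k, (-1 : ℝ) ^ j * ((n : ℝ) + (k : ℝ) - 2 * (j : ℝ)) * B j)
    (hC' : C' = 1 + ∑ j ∈ Finset.Icc 1 k, (-1 : ℝ) ^ j * A j)
    (hD' : D' = ∑ j ∈ Finset.Icc 1 k, (-1 : ℝ) ^ j * B j)
    (hc : c = (Cbig * Dbig - C' * D') / (Dbig ^ 2 - D' ^ 2))
    (hρ : ρ = (C' * Dbig - Cbig * D') / (Dbig ^ 2 - D' ^ 2))
    (hDpos : Dbig ^ 2 - D' ^ 2 > 0) :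
    (‖deriv O (-1)‖ < 1 ↔ ‖α + (c : ℂ)‖ < |ρ|) ∧
    (‖deriv O (-1)‖ = 1 ↔ ‖α + (c : ℂ)‖ = |ρ|) ∧
    (‖deriv O (-1)‖ > 1 ↔ ‖α + (c : ℂ)‖ > |ρ|) := by
  have hder := deriv_part n k hn hk hodd r hr P hP O hO
  have hcp := coeff_part k hk r P hP (fun j => (A j : ℂ) + (B j : ℂ) * α) hcoef
  have hpe0 : P.eval (-1) ≠ 0 := by
    rw [hP, eval_prod]
    simp only [eval_sub, eval_X, eval_C]
    refine Finset.prod_ne_zero_iff.mpr fun i _ => fun h => hr i ?_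
    linear_combination -h
  have hKne : ((-1:ℂ)^k) ≠ 0 := pow_ne_zero _ (by norm_num)
  have hpe : P.eval (-1)
      = (-1:ℂ)^k * (1 + ∑ j ∈ Finset.Icc 1 k, (-1:ℂ)^j * ((A j : ℂ) + (B j : ℂ) * α)) :=
    hcp.1
  have hpd : (derivative P).eval (-1)
      = (-1:ℂ)^(k-1) * ((k:ℂ) + ∑ j ∈ Finset.Icc 1 k,
          (-1:ℂ)^j * ((k:ℂ)-(j:ℂ)) * ((A j : ℂ) + (B j : ℂ) * α)) :=
    hcp.2
  set v : ℂ := 1 + ∑ j ∈ Finset.Icc 1 k, (-1:ℂ)^j * ((A j : ℂ) + (B j : ℂ) * α) with hvdef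
  set w : ℂ := (k:ℂ) + ∑ j ∈ Finset.Icc 1 k,
    (-1:ℂ)^j * ((k:ℂ)-(j:ℂ)) * ((A j : ℂ) + (B j : ℂ) * α) with hwdef
  have hv0 : v ≠ 0 := fun h => hpe0 (by rw [hpe, h, mul_zero])
  have hKm : (-1:ℂ)^(k-1) = -(-1:ℂ)^k := by
    have h : (-1:ℂ)^(k-1) * (-1) = (-1:ℂ)^k := by rw [← pow_succ]; congr 1; omega
    linear_combination -h
  have hder2 : deriv O (-1) = (((n:ℂ) - k) * v + 2 * w) / v := by
    rw [hder, hpe, hpd, hKm,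
      show ((n:ℂ) - k) * ((-1:ℂ)^k * v) - 2 * (-(-1:ℂ)^k * w)
        = (-1:ℂ)^k * (((n:ℂ) - k) * v + 2 * w) by ring,
      mul_div_mul_left _ _ hKne]
  have hvv : ((C':ℝ):ℂ) + ((D':ℝ):ℂ) * α = v := by
    rw [hvdef, hC', hD']
    push_cast
    rw [Finset.sum_mul, add_assoc, ← Finset.sum_add_distrib]
    congr 1
    exact Finset.sum_congr rfl fun j _ => by ring
  have hsums : ∑ j ∈ Finset.Icc 1 k,
        ((-1:ℂ)^j * ((n:ℂ) + (k:ℂ) - 2 * (j:ℂ)) * ((A j : ℝ):ℂ)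
          + (-1:ℂ)^j * ((n:ℂ) + (k:ℂ) - 2 * (j:ℂ)) * ((B j : ℝ):ℂ) * α)
      = ∑ j ∈ Finset.Icc 1 k,
        (((n:ℂ) - (k:ℂ)) * ((-1:ℂ)^j * ((A j : ℂ) + (B j : ℂ) * α))
          + 2 * ((-1:ℂ)^j * ((k:ℂ)-(j:ℂ)) * ((A j : ℂ) + (B j : ℂ) * α))) :=
    Finset.sum_congr rfl fun j _ => by ring
  have hcomb : (((n:ℂ) - k) * v + 2 * w) = ((Cbig:ℝ):ℂ) + ((Dbig:ℝ):ℂ) * α := by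
    rw [hvdef, hwdef, hCbig, hDbig]
    push_cast
    rw [Finset.sum_mul, add_assoc, ← Finset.sum_add_distrib, hsums,
      Finset.sum_add_distrib, ← Finset.mul_sum, ← Finset.mul_sum]
    ring
  have hfinal : deriv O (-1)
      = (((Cbig:ℝ):ℂ) + ((Dbig:ℝ):ℂ) * α) / (((C':ℝ):ℂ) + ((D':ℝ):ℂ) * α) := by
    rw [hder2, hcomb, hvv]
  have hv0' : (((C':ℝ):ℂ) + ((D':ℝ):ℂ) * α) ≠ 0 := by rw [hvv]; exact hv0
  exact final_part Cbig Dbig C' D' c ρ α hc hρ hDpos hv0' _ hfinal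
end

section
/- Let n ≥ 1, let a_1, …, a_{n−1} ∈ ℝ and α ∈ ℂ, and let r_1, …, r_n ∈ ℂ with r_i ≠ 1 for all i, such that ∏_{i=1}^n (X − r_i) = X^n + a_1 X^{n−1} + ⋯ + a_{n−1} X + α (i.e. the coefficient of X^{n−j} is a_j for j = 1, …, n−1 and the constant coefficient is α). Define O(z) = z^n·∏_{i=1}^n (z − r_i)/(1 − r_i z), and set A = 2n + 2∑_{j=1}^{n−1} (n−j)a_j and A' = 1 + ∑_{j=1}^{n−1} a_j. Then O'(1) = A/(A' + α), and consequently: the fixed point z = 1 is attracting (|O'(1)| < 1) if and only if |α + A'| > |A|; indifferent (|O'(1)| = 1) if and only if |α + A'| = |A|; and repelling (|O'(1)| > 1) if and only if |α + A'| < |A|. Moreover, if A = 0 then O'(1) = 0, i.e. z = 1 is superattracting. -/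
open Polynomial

/-- The case `n = k`: the Newton-like operator
`O(z) = z^n·∏ (z − rᵢ)/(1 − rᵢz)` with `∏ (X − rᵢ) = X^n + a₁X^{n−1} + ⋯ + a_{n−1}X + α`,
where `a₁, …, a_{n−1} ∈ ℝ` and `α ∈ ℂ`. With `A = 2n + 2∑_{j=1}^{n−1}(n−j)a_j` and
`A' = 1 + ∑_{j=1}^{n−1}a_j`: `O'(1) = A/(A'+α)`; hence `z = 1` is attracting iff
`|α+A'| > |A|`, indifferent iff `|α+A'| = |A|`, repelling iff `|α+A'| < |A|`; and if
`A = 0` then `O'(1) = 0` (superattracting). -/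
theorem stmt19 (n : ℕ) (hn : 1 ≤ n)
    (a : ℕ → ℝ) (α : ℂ)
    (r : Fin n → ℂ) (hr : ∀ i, r i ≠ 1)
    (P : Polynomial ℂ) (hP : P = ∏ i, (X - C (r i)))
    (hcoef : ∀ j ∈ Finset.Icc 1 (n - 1), P.coeff (n - j) = (a j : ℂ))
    (hconst : P.coeff 0 = α)
    (O : ℂ → ℂ) (hO : ∀ z : ℂ, O z = z ^ n * ∏ i, (z - r i) / (1 - r i * z))
    (A A' : ℝ)
    (hA : A = 2 * (n : ℝ) + 2 * ∑ j ∈ Finset.Icc 1 (n - 1), ((n : ℝ) - (j : ℝ)) * a j)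
    (hA' : A' = 1 + ∑ j ∈ Finset.Icc 1 (n - 1), a j) :
    deriv O 1 = (A : ℂ) / ((A' : ℂ) + α) ∧
    (‖deriv O 1‖ < 1 ↔ ‖α + (A' : ℂ)‖ > |A|) ∧
    (‖deriv O 1‖ = 1 ↔ ‖α + (A' : ℂ)‖ = |A|) ∧
    (‖deriv O 1‖ > 1 ↔ ‖α + (A' : ℂ)‖ < |A|) ∧
    (A = 0 → deriv O 1 = 0) := by
  classical
  have hr0 : ∀ i : Fin n, (1 : ℂ) - r i ≠ 0 := fun i => sub_ne_zero.mpr fun h => hr i h.symm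
  set p1 : ℂ := ∏ i, (1 - r i) with hp1
  set E : Fin n → ℂ := fun i => ∏ j ∈ Finset.univ.erase i, (1 - r j) with hE
  set dp1 : ℂ := ∑ i, E i with hdp1
  have hp1ne : p1 ≠ 0 := Finset.prod_ne_zero_iff.mpr fun i _ => hr0 i
  -- derivative of ∏ (z - r i) at 1
  have hprodD : HasDerivAt (fun z : ℂ => ∏ i, (z - r i)) dp1 1 := by
    have := HasDerivAt.fun_finsetProd (u := Finset.univ) (x := (1:ℂ))
      (f := fun i (z : ℂ) => z - r i) (f' := fun _ => 1)
      (fun i _ => (hasDerivAt_id 1).sub_const (r i))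
    simpa [hE, hdp1] using this
  -- connect to polynomial data
  have hfun : (fun z : ℂ => P.eval z) = fun z : ℂ => ∏ i, (z - r i) := by
    funext z; rw [hP]; simp [eval_prod]
  have hDP1 : P.derivative.eval 1 = dp1 := (hfun ▸ P.hasDerivAt 1).unique hprodD
  have hP1 : P.eval 1 = p1 := by simpa using congrFun hfun 1
  -- derivative of denominator product at 1
  have hQD : HasDerivAt (fun z : ℂ => ∏ i, (1 - r i * z)) ((n : ℂ) * p1 - dp1) 1 := by
    have h1 : ∀ i ∈ Finset.univ, HasDerivAt (fun z : ℂ => 1 - r i * z) (-r i) 1 :=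
      fun i _ => by simpa using ((hasDerivAt_id (1:ℂ)).const_mul (r i)).const_sub 1
    have := HasDerivAt.fun_finsetProd (u := Finset.univ) (x := (1:ℂ))
      (f := fun i (z : ℂ) => 1 - r i * z) (f' := fun i => -r i) h1
    have hval : (∑ i, (∏ j ∈ Finset.univ.erase i, (1 - r j * 1)) • (-r i))
        = (n : ℂ) * p1 - dp1 := by
      have : ∀ i : Fin n, (∏ j ∈ Finset.univ.erase i, (1 - r j * 1)) • (-r i) = p1 - E i := by
        intro i
        have h2 : E i * (1 - r i) = p1 := Finset.prod_erase_mul _ _ (Finset.mem_univ i)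
        simp only [mul_one, smul_eq_mul, hE]
        rw [show (-r i) = (1 - r i) - 1 by ring]
        rw [mul_sub, h2]; simp [hE]
      rw [Finset.sum_congr rfl fun i _ => this i, Finset.sum_sub_distrib]
      simp [hdp1, mul_comm]
    rw [← hval]; simpa using this
  -- derivative of numerator at 1
  have hND : HasDerivAt (fun z : ℂ => z ^ n * ∏ i, (z - r i)) ((n : ℂ) * p1 + dp1) 1 := by
    have hp : HasDerivAt (fun z : ℂ => z ^ n) ((n : ℂ) * 1 ^ (n - 1)) 1 := hasDerivAt_pow n 1
    have := hp.fun_mul hprodD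
    simpa [hp1] using this
  -- O as a quotient
  have hOeq : O = fun z : ℂ => (z ^ n * ∏ i, (z - r i)) / ∏ i, (1 - r i * z) := by
    funext z; rw [hO, Finset.prod_div_distrib, mul_div_assoc]
  have hQ1 : (∏ i, (1 - r i * (1:ℂ))) = p1 := by simp [hp1]
  have hOD : HasDerivAt O ((((n : ℂ) * p1 + dp1) * p1 - p1 * ((n : ℂ) * p1 - dp1)) / p1 ^ 2) 1 := by
    rw [hOeq]
    have := hND.fun_div hQD (by rw [hQ1]; exact hp1ne)
    simpa [hQ1, hp1] using this
  have hderiv : deriv O 1 = 2 * dp1 / p1 := by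
    rw [hOD.deriv]; field_simp; ring
  -- coefficient computations
  have hmonic : P.Monic := by rw [hP]; exact monic_prod_of_monic _ _ fun i _ => monic_X_sub_C (r i)
  have hdeg : P.natDegree = n := by
    rw [hP, natDegree_prod_of_monic _ _ fun i _ => monic_X_sub_C (r i)]
    simp
  have hlead : P.coeff n = 1 := by
    have := hmonic.leadingCoeff
    rwa [leadingCoeff, hdeg] at this
  have hIco : Finset.Icc 1 (n-1) = Finset.Ico 1 n := by
    rw [← Finset.Ico_add_one_right_eq_Icc]; congr 1; omega
  -- reindexing lemma
  have hre : ∀ f : ℕ → ℂ, ∑ k ∈ Finset.Ico 1 n, P.coeff k * f k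
      = ∑ j ∈ Finset.Icc 1 (n-1), (a j : ℂ) * f (n - j) := by
    intro f
    refine Finset.sum_nbij' (fun k => n - k) (fun j => n - j) ?_ ?_ ?_ ?_ ?_
    · intro k hk; simp only [Finset.mem_Ico] at hk; simp only [Finset.mem_Icc]; omega
    · intro j hj; simp only [Finset.mem_Icc] at hj; simp only [Finset.mem_Ico]; omega
    · intro k hk; simp only [Finset.mem_Ico] at hk; show n - (n - k) = k; omega
    · intro j hj; simp only [Finset.mem_Icc] at hj; show n - (n - j) = j; omega
    · intro k hk
      simp only [Finset.mem_Ico] at hk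
      have hm : n - k ∈ Finset.Icc 1 (n-1) := by simp only [Finset.mem_Icc]; omega
      have := hcoef (n - k) hm
      rw [show n - (n - k) = k by omega] at this
      rw [this, show n - (n - k) = k by omega]
  -- eval 1
  have hrange : Finset.range n = insert 0 (Finset.Ico 1 n) := by
    ext x; simp [Finset.mem_Ico]; omega
  have hPeval : P.eval 1 = (A' : ℂ) + α := by
    have h0 : P.natDegree < n + 1 := by omega
    rw [eval_eq_sum_range' h0]
    simp only [one_pow, mul_one]
    rw [Finset.range_add_one, Finset.sum_insert (by simp), hrange,
      Finset.sum_insert (by simp), hconst, hlead]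
    have := hre (fun _ => 1)
    simp only [mul_one] at this
    rw [this, hA']
    push_cast
    ring
  have hPder : P.derivative.eval 1 = (A : ℂ) / 2 := by
    have h0 : P.derivative.natDegree < n := by
      have := natDegree_derivative_lt (p := P) (by omega)
      omega
    rw [eval_eq_sum_range' h0]
    simp only [one_pow, mul_one, coeff_derivative]
    have hshift : ∑ i ∈ Finset.range n, P.coeff (i + 1) * ((i : ℂ) + 1)
        = ∑ k ∈ Finset.Ico 1 (n + 1), P.coeff k * (k : ℂ) := by
      rw [Finset.sum_Ico_eq_sum_range]
      simp only [Nat.add_sub_cancel]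
      refine Finset.sum_congr rfl fun i _ => by rw [add_comm 1 i]; push_cast; ring
    rw [hshift]
    have hsplit : Finset.Ico 1 (n + 1) = insert n (Finset.Ico 1 n) := by
      ext x; simp [Finset.mem_Ico]; omega
    rw [hsplit, Finset.sum_insert (by simp), hlead, hre (fun k => (k : ℂ)), hA]
    have hterm : ∑ j ∈ Finset.Icc 1 (n-1), (a j : ℂ) * ((n - j : ℕ) : ℂ)
        = ∑ j ∈ Finset.Icc 1 (n-1), ((((n : ℝ) - (j : ℝ)) * a j : ℝ) : ℂ) := by
      refine Finset.sum_congr rfl fun j hj => ?_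
      simp only [Finset.mem_Icc] at hj
      rw [Nat.cast_sub (by omega)]
      push_cast; ring
    rw [hterm]
    push_cast
    ring
  have hfinal : deriv O 1 = (A : ℂ) / ((A' : ℂ) + α) := by
    rw [hderiv, ← hDP1, hPder, show p1 = P.eval 1 from hP1.symm, hPeval]
    ring
  have hw : (A' : ℂ) + α ≠ 0 := by rw [← hPeval, hP1]; exact hp1ne
  have hpos : 0 < ‖α + (A' : ℂ)‖ := by
    rw [add_comm]; exact (norm_pos_iff.mpr hw)
  have habs : ‖deriv O 1‖ = |A| / ‖α + (A' : ℂ)‖ := by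
    rw [hfinal, norm_div, Complex.norm_real, Real.norm_eq_abs, add_comm α]
  refine ⟨hfinal, ?_, ?_, ?_, ?_⟩
  · rw [habs]; exact div_lt_one hpos
  · rw [habs, div_eq_one_iff_eq hpos.ne']; exact eq_comm
  · rw [habs]; exact one_lt_div hpos
  · intro h0; rw [hfinal, h0]; simp
end
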